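/- arXiv:math/0611247 — 5 statements merged into one kernel-verified Lean document; each statement's English description precedes it below -/
import Mathlib

section
/- Let b > 0 and b ≤ c ≤ b+1. Then for every H¹ function v on [b,b+1] satisfying ∫_b^{b+1} v(r)·r dr = 0, one has v(c)² ≤ Φ(b,c) · ∫_b^{b+1} v'(r)² · r dr, where Φ(b,c) := (1/(4(2b+1)²))·( 4(b+1)⁴·log(b+1) − 4b⁴·log b − (2b+1)·( 3 + 6b + 6b² − 4c² + 4(2b²+2b+1)·log c ) ). -/
open MeasureTheory Set

/-- The sharp constant `Φ(b,c)` in the weighted Poincaré inequality on `[b, b+1]`. -/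
noncomputable def Phi (b c : ℝ) : ℝ :=
  (1 / (4 * (2 * b + 1) ^ 2)) *
    (4 * (b + 1) ^ 4 * Real.log (b + 1) - 4 * b ^ 4 * Real.log b
      - (2 * b + 1) * (3 + 6 * b + 6 * b ^ 2 - 4 * c ^ 2
          + 4 * (2 * b ^ 2 + 2 * b + 1) * Real.log c))


noncomputable def Kf (b c : ℝ) (t : ℝ) : ℝ :=
  if t ≤ c then (t^2 - b^2)/2 else (t^2 - (b+1)^2)/2


lemma fubini_primitive {a d : ℝ} (had : a ≤ d) {f : ℝ → ℝ}
    (hf : IntegrableOn f (Ioc a d)) :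
    ∫ r in a..d, (∫ t in a..r, f t) * r = ∫ t in a..d, f t * ((d^2 - t^2)/2) := by
  set μ : Measure ℝ := volume.restrict (Ioc a d) with hμ
  have hfin : IsFiniteMeasure μ := by
    constructor
    rw [hμ, Measure.restrict_apply_univ, Real.volume_Ioc]
    exact ENNReal.ofReal_lt_top
  set F : ℝ × ℝ → ℝ := fun p => if p.2 ≤ p.1 then f p.2 * p.1 else 0 with hF
  have hSmeas : MeasurableSet {p : ℝ × ℝ | p.2 ≤ p.1} :=
    measurableSet_le measurable_snd measurable_fst
  have hFindicator : F = Set.indicator {p : ℝ × ℝ | p.2 ≤ p.1} (fun p => f p.2 * p.1) := by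
    ext p; simp [hF, Set.indicator_apply]
  have hFaesm : AEStronglyMeasurable F (μ.prod μ) := by
    rw [hFindicator]
    exact ((hf.aestronglyMeasurable.comp_snd.mul
      (measurable_fst.aestronglyMeasurable)).indicator hSmeas)
  have haefst : ∀ᵐ p ∂(μ.prod μ), p.1 ∈ Ioc a d := by
    rw [ae_iff]
    have hsub : {p : ℝ × ℝ | ¬ p.1 ∈ Ioc a d} ⊆ ((Ioc a d)ᶜ) ×ˢ (univ : Set ℝ) := by
      intro p hp; exact ⟨hp, mem_univ _⟩
    refine measure_mono_null hsub ?_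
    rw [Measure.prod_prod]
    have : μ ((Ioc a d)ᶜ) = 0 := by
      rw [hμ, Measure.restrict_apply (measurableSet_Ioc.compl)]
      simp
    simp [this]
  have hFint : Integrable F (μ.prod μ) := by
    set C := max |a| |d| with hC
    have hdom : Integrable (fun p : ℝ × ℝ => C * ‖f p.2‖) (μ.prod μ) := by
      rw [integrable_prod_iff]
      constructor
      · exact Filter.Eventually.of_forall fun r => (hf.norm.const_mul C)
      · exact (integrable_const (∫ y, ‖C * ‖f y‖‖ ∂μ) : Integrable _ μ)
      · exact (hf.aestronglyMeasurable.norm.comp_snd.const_mul C)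
    refine hdom.mono' hFaesm ?_
    filter_upwards [haefst] with p hp
    rw [hF]
    simp only [Real.norm_eq_abs]
    by_cases h : p.2 ≤ p.1
    · simp only [h, if_true, abs_mul]
      rw [mul_comm]
      apply mul_le_mul_of_nonneg_right _ (abs_nonneg _)
      rcases hp with ⟨h1, h2⟩
      refine abs_le.mpr ⟨?_, ?_⟩
      · exact le_trans (neg_le_neg (le_max_left |a| |d|)) (le_trans (neg_abs_le a) h1.le)
      · exact le_trans h2 (le_trans (le_abs_self d) (le_max_right _ _))
    · simp only [h, if_false, abs_zero]
      positivity
  -- step 1: rewrite LHS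
  have hL : ∫ r in a..d, (∫ t in a..r, f t) * r = ∫ r, (∫ t, F (r, t) ∂μ) ∂μ := by
    rw [intervalIntegral.integral_of_le had]
    refine setIntegral_congr_ae measurableSet_Ioc ?_
    refine Filter.Eventually.of_forall fun r hr => ?_
    have h1 : ∫ t in a..r, f t = ∫ t, (Ioc a r).indicator f t ∂μ := by
      rw [intervalIntegral.integral_of_le hr.1.le, hμ, setIntegral_indicator measurableSet_Ioc,
        Set.inter_eq_right.mpr (Ioc_subset_Ioc_right hr.2)]
    rw [h1, ← integral_mul_const]
    refine integral_congr_ae ?_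
    filter_upwards [ae_restrict_mem measurableSet_Ioc] with t ht
    simp only [hF, Set.indicator_apply, mem_Ioc]
    by_cases h : t ≤ r
    · simp [h, ht.1]
    · simp [h]
  -- swap
  have hswap : ∫ r, (∫ t, F (r, t) ∂μ) ∂μ = ∫ t, (∫ r, F (r, t) ∂μ) ∂μ :=
    integral_integral_swap hFint
  -- step 2: inner integral
  have hR : ∫ t, (∫ r, F (r, t) ∂μ) ∂μ = ∫ t in a..d, f t * ((d^2 - t^2)/2) := by
    rw [intervalIntegral.integral_of_le had]
    refine setIntegral_congr_ae measurableSet_Ioc ?_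
    refine Filter.Eventually.of_forall fun t ht => ?_
    have h1 : (fun r => F (r, t)) = (Ici t).indicator (fun r => f t * r) := by
      ext r; simp [hF, Set.indicator_apply, mem_Ici]
    rw [h1, hμ, setIntegral_indicator measurableSet_Ici]
    have h2 : Ioc a d ∩ Ici t = Icc t d := by
      ext r; simp only [mem_inter_iff, mem_Ioc, mem_Ici, mem_Icc]
      constructor
      · rintro ⟨⟨_, h2⟩, h3⟩; exact ⟨h3, h2⟩
      · rintro ⟨h1', h2⟩; exact ⟨⟨lt_of_lt_of_le ht.1 h1', h2⟩, h1'⟩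
    rw [h2, integral_Icc_eq_integral_Ioc, ← intervalIntegral.integral_of_le ht.2,
      intervalIntegral.integral_const_mul, integral_id]
  rw [hL, hswap, hR]

lemma Kf_measurable (b c : ℝ) : Measurable (Kf b c) := by
  unfold Kf
  exact Measurable.ite (measurableSet_le measurable_id measurable_const)
    (by fun_prop) (by fun_prop)

lemma Kf_bound {b c : ℝ} (hb : 0 < b) (t : ℝ) (ht : t ∈ Icc b (b+1)) :
    |Kf b c t| ≤ (b+1)^2 := by
  rcases ht with ⟨h1, h2⟩
  unfold Kf
  have h3 : t^2 ≤ (b+1)^2 := by nlinarith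
  have h4 : b^2 ≤ t^2 := by nlinarith
  split <;> rw [abs_le] <;> constructor <;> nlinarith

lemma hasDerivAt_H (a t : ℝ) (ht : 0 < t) :
    HasDerivAt (fun x => (x^4/4 - a^2*x^2 + a^4 * Real.log x)/4)
      (((t^2 - a^2)/2)^2 / t) t := by
  have hp : HasDerivAt (fun x : ℝ => x^4/4) (t^3) t := by
    have := (hasDerivAt_pow 4 t).div_const 4
    exact this.congr_deriv (by norm_num)
  have hq : HasDerivAt (fun x : ℝ => a^2*x^2) (a^2*(2*t)) t := by
    have := (hasDerivAt_pow 2 t).const_mul (a^2)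
    exact this.congr_deriv (by norm_num)
  have hl : HasDerivAt (fun x : ℝ => a^4 * Real.log x) (a^4 * t⁻¹) t :=
    (Real.hasDerivAt_log ht.ne').const_mul (a^4)
  have h1 := ((hp.sub hq).add hl).div_const 4
  refine h1.congr_deriv ?_
  field_simp
  ring

lemma K_integral {b c : ℝ} (hb : 0 < b) (hc : c ∈ Icc b (b+1)) :
    ∫ t in Ioo b (b+1), (Kf b c t)^2 / t = ((2*b+1)/2)^2 * Phi b c := by
  have hc1 := hc.1
  have hc2 := hc.2
  have hcpos : 0 < c := lt_of_lt_of_le hb hc1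
  have hBpos : (0:ℝ) < b+1 := by linarith
  have cont1 : ContinuousOn (fun t => ((t^2 - b^2)/2)^2 / t) (Icc b c) := by
    apply ContinuousOn.div (by fun_prop) continuousOn_id
    intro x hx; exact (lt_of_lt_of_le hb hx.1).ne'
  have cont2 : ContinuousOn (fun t => ((t^2 - (b+1)^2)/2)^2 / t) (Icc c (b+1)) := by
    apply ContinuousOn.div (by fun_prop) continuousOn_id
    intro x hx; exact (lt_of_lt_of_le hcpos hx.1).ne'
  have int1 : ∫ t in Ioc b c, (Kf b c t)^2 / t = ∫ t in b..c, ((t^2 - b^2)/2)^2 / t := by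
    rw [intervalIntegral.integral_of_le hc1]
    refine setIntegral_congr_ae measurableSet_Ioc ?_
    refine Filter.Eventually.of_forall fun t ht => ?_
    rw [Kf, if_pos ht.2]
  have int2 : ∫ t in Ioc c (b+1), (Kf b c t)^2 / t
      = ∫ t in c..(b+1), ((t^2 - (b+1)^2)/2)^2 / t := by
    rw [intervalIntegral.integral_of_le hc2]
    refine setIntegral_congr_ae measurableSet_Ioc ?_
    refine Filter.Eventually.of_forall fun t ht => ?_
    rw [Kf, if_neg (not_le.mpr ht.1)]
  have ftc1 : ∫ t in b..c, ((t^2 - b^2)/2)^2 / t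
      = ((c^4/4 - b^2*c^2 + b^4 * Real.log c)/4) - ((b^4/4 - b^2*b^2 + b^4 * Real.log b)/4) := by
    apply intervalIntegral.integral_eq_sub_of_hasDerivAt
      (f := fun x => (x^4/4 - b^2*x^2 + b^4 * Real.log x)/4)
    · intro x hx
      rw [uIcc_of_le hc1] at hx
      exact hasDerivAt_H b x (lt_of_lt_of_le hb hx.1)
    · exact ContinuousOn.intervalIntegrable (by rwa [uIcc_of_le hc1])
  have ftc2 : ∫ t in c..(b+1), ((t^2 - (b+1)^2)/2)^2 / t
      = (((b+1)^4/4 - (b+1)^2*(b+1)^2 + (b+1)^4 * Real.log (b+1))/4)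
        - ((c^4/4 - (b+1)^2*c^2 + (b+1)^4 * Real.log c)/4) := by
    apply intervalIntegral.integral_eq_sub_of_hasDerivAt
      (f := fun x => (x^4/4 - (b+1)^2*x^2 + (b+1)^4 * Real.log x)/4)
    · intro x hx
      rw [uIcc_of_le hc2] at hx
      exact hasDerivAt_H (b+1) x (lt_of_lt_of_le hcpos hx.1)
    · exact ContinuousOn.intervalIntegrable (by rwa [uIcc_of_le hc2])
  have hsplit : ∫ t in Ioo b (b+1), (Kf b c t)^2 / t
      = (∫ t in Ioc b c, (Kf b c t)^2 / t) + ∫ t in Ioc c (b+1), (Kf b c t)^2 / t := by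
    rw [← integral_Ioc_eq_integral_Ioo, ← Ioc_union_Ioc_eq_Ioc hc1 hc2]
    apply setIntegral_union (Ioc_disjoint_Ioc_of_le le_rfl) measurableSet_Ioc
    · apply Integrable.mono' (integrable_const ((b+1)^4/b))
      · exact ((((Kf_measurable b c).pow_const 2).div measurable_id).aestronglyMeasurable)
      · filter_upwards [ae_restrict_mem measurableSet_Ioc] with t ht
        have htpos : 0 < t := lt_trans hb ht.1
        have hK := Kf_bound (c := c) hb t ⟨ht.1.le, le_trans ht.2 hc2⟩
        rw [Real.norm_eq_abs, abs_div, abs_of_pos htpos, abs_pow]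
        rw [div_le_div_iff₀ htpos hb] at *
        have h5 : |Kf b c t|^2 ≤ ((b+1)^2)^2 := by nlinarith [abs_nonneg (Kf b c t)]
        nlinarith [abs_nonneg (Kf b c t), ht.1, hb, sq_nonneg ((b+1)^2)]
    · apply Integrable.mono' (integrable_const ((b+1)^4/b))
      · exact ((((Kf_measurable b c).pow_const 2).div measurable_id).aestronglyMeasurable)
      · filter_upwards [ae_restrict_mem measurableSet_Ioc] with t ht
        have htpos : 0 < t := lt_trans hcpos ht.1
        have htb : b < t := lt_of_le_of_lt hc1 ht.1
        have hK := Kf_bound (c := c) hb t ⟨htb.le, ht.2⟩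
        rw [Real.norm_eq_abs, abs_div, abs_of_pos htpos, abs_pow]
        rw [div_le_div_iff₀ htpos hb] at *
        have h5 : |Kf b c t|^2 ≤ ((b+1)^2)^2 := by nlinarith [abs_nonneg (Kf b c t)]
        nlinarith [abs_nonneg (Kf b c t), ht.1, hb, sq_nonneg ((b+1)^2)]
  rw [hsplit, int1, int2, ftc1, ftc2, Phi]
  have h2b : (2*b+1) ≠ 0 := by positivity
  field_simp
  ring

-- Step A: the representation identity
lemma repr_identity (b c : ℝ) (hb : 0 < b) (hc : c ∈ Set.Icc b (b + 1))
    (v g : ℝ → ℝ) (hv : ContinuousOn v (Set.Icc b (b + 1)))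
    (hgi : IntegrableOn g (Ioc b (b + 1)))
    (hvg : ∀ x ∈ Set.Icc b (b + 1), v x = v b + ∫ t in b..x, g t)
    (hmean : (∫ r in b..(b + 1), v r * r) = 0) :
    v c * ((2*b+1)/2) = ∫ t in Ioo b (b+1), g t * Kf b c t := by
  have hc1 := hc.1
  have hc2 := hc.2
  have hbB : b ≤ b + 1 := by linarith
  have hvint : IntervalIntegrable (fun r => v r * r) volume b (b+1) :=
    ContinuousOn.intervalIntegrable (by rw [uIcc_of_le hbB]; exact hv.mul continuousOn_id)
  have hvcr : IntervalIntegrable (fun r => v c * r) volume b (b+1) :=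
    ContinuousOn.intervalIntegrable
      (by rw [uIcc_of_le hbB]; exact continuousOn_const.mul continuousOn_id)
  -- A1
  have hA1 : v c * ((2*b+1)/2) = ∫ r in b..(b+1), (v c - v r) * r := by
    have : ∫ r in b..(b+1), (v c - v r) * r
        = (∫ r in b..(b+1), v c * r) - ∫ r in b..(b+1), v r * r := by
      rw [← intervalIntegral.integral_sub hvcr hvint]
      congr 1; ext r; ring
    rw [this, hmean, intervalIntegral.integral_const_mul, integral_id]
    ring
  -- interval integrability of g on subintervals
  have hgiIcc : IntegrableOn g (Icc b (b+1)) := by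
    rwa [integrableOn_Icc_iff_integrableOn_Ioc]
  have hgInt : ∀ x ∈ Icc b (b+1), ∀ y ∈ Icc b (b+1), IntervalIntegrable g volume x y := by
    intro x hx y hy
    exact (hgiIcc.mono_set (uIcc_subset_Icc hx hy)).intervalIntegrable
  -- A2
  have hA2 : ∀ r ∈ Icc b (b+1), v c - v r = ∫ t in r..c, g t := by
    intro r hr
    rw [hvg c hc, hvg r hr]
    have := intervalIntegral.integral_interval_sub_left
      (hgInt b (left_mem_Icc.mpr hbB) c hc) (hgInt b (left_mem_Icc.mpr hbB) r hr)
    rw [← this]; ring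
  -- split
  have hcont : ContinuousOn (fun r => (v c - v r) * r) (Icc b (b+1)) :=
    (continuousOn_const.sub hv).mul continuousOn_id
  have hsplit : ∫ r in b..(b+1), (v c - v r) * r
      = (∫ r in b..c, (v c - v r) * r) + ∫ r in c..(b+1), (v c - v r) * r := by
    rw [intervalIntegral.integral_add_adjacent_intervals]
    · exact ContinuousOn.intervalIntegrable
        (by rw [uIcc_of_le hc1]; exact hcont.mono (Icc_subset_Icc le_rfl hc2))
    · exact ContinuousOn.intervalIntegrable
        (by rw [uIcc_of_le hc2]; exact hcont.mono (Icc_subset_Icc hc1 le_rfl))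
  -- piece 1
  have hP1 : ∫ r in b..c, (v c - v r) * r = ∫ t in b..c, g t * ((t^2 - b^2)/2) := by
    have e1 : ∫ r in b..c, (v c - v r) * r
        = ∫ r in b..c, ((∫ t in b..c, g t) - ∫ t in b..r, g t) * r := by
      rw [intervalIntegral.integral_of_le hc1, intervalIntegral.integral_of_le hc1]
      refine setIntegral_congr_ae measurableSet_Ioc ?_
      refine Filter.Eventually.of_forall fun r hr => ?_
      have hr' : r ∈ Icc b (b+1) := ⟨hr.1.le, le_trans hr.2 hc2⟩
      rw [hA2 r hr']
      congr 1
      rw [← intervalIntegral.integral_interval_sub_left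
        (hgInt b (left_mem_Icc.mpr hbB) c hc) (hgInt b (left_mem_Icc.mpr hbB) r hr')]
    have hPcont : ContinuousOn (fun r => (∫ t in b..r, g t) * r) (Icc b c) := by
      apply ContinuousOn.mul _ continuousOn_id
      have := intervalIntegral.continuousOn_primitive
        (a := b) (b := c) (f := g) (hgiIcc.mono_set (Icc_subset_Icc le_rfl hc2))
      apply this.congr
      intro x hx
      show (∫ t in b..x, g t) = ∫ t in Ioc b x, g t
      rw [intervalIntegral.integral_of_le hx.1]
    have e2 : ∫ r in b..c, ((∫ t in b..c, g t) - ∫ t in b..r, g t) * r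
        = (∫ t in b..c, g t) * ((c^2 - b^2)/2) - ∫ t in b..c, g t * ((c^2 - t^2)/2) := by
      have hi1 : IntervalIntegrable (fun r => (∫ t in b..c, g t) * r) volume b c :=
        ContinuousOn.intervalIntegrable
          (by rw [uIcc_of_le hc1]; exact continuousOn_const.mul continuousOn_id)
      have hi2 : IntervalIntegrable (fun r => (∫ t in b..r, g t) * r) volume b c :=
        ContinuousOn.intervalIntegrable (by rw [uIcc_of_le hc1]; exact hPcont)
      have he : ∀ r : ℝ, ((∫ t in b..c, g t) - ∫ t in b..r, g t) * r
          = (∫ t in b..c, g t) * r - (∫ t in b..r, g t) * r := fun r => by ring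
      simp_rw [he]
      rw [intervalIntegral.integral_sub hi1 hi2, intervalIntegral.integral_const_mul,
        integral_id,
        fubini_primitive hc1 (hgi.mono_set (Ioc_subset_Ioc_right hc2))]
    rw [e1, e2]
    have hgic : IntervalIntegrable g volume b c := hgInt b (left_mem_Icc.mpr hbB) c hc
    have hK1 : IntervalIntegrable (fun t => g t * ((c^2 - t^2)/2)) volume b c :=
      hgic.mul_continuousOn (by fun_prop)
    have hK2 : IntervalIntegrable (fun t => g t * ((c^2 - b^2)/2)) volume b c :=
      hgic.mul_continuousOn (by fun_prop)
    rw [show (∫ t in b..c, g t) * ((c^2 - b^2)/2) = ∫ t in b..c, g t * ((c^2 - b^2)/2) by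
      rw [intervalIntegral.integral_mul_const]]
    rw [← intervalIntegral.integral_sub hK2 hK1]
    congr 1; ext t; ring
  -- piece 2
  have hP2 : ∫ r in c..(b+1), (v c - v r) * r
      = ∫ t in c..(b+1), g t * ((t^2 - (b+1)^2)/2) := by
    have e1 : ∫ r in c..(b+1), (v c - v r) * r
        = ∫ r in c..(b+1), -((∫ t in c..r, g t) * r) := by
      rw [intervalIntegral.integral_of_le hc2, intervalIntegral.integral_of_le hc2]
      refine setIntegral_congr_ae measurableSet_Ioc ?_
      refine Filter.Eventually.of_forall fun r hr => ?_
      have hr' : r ∈ Icc b (b+1) := ⟨le_trans hc1 hr.1.le, hr.2⟩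
      rw [hA2 r hr', intervalIntegral.integral_symm]
      ring
    rw [e1, intervalIntegral.integral_neg,
      fubini_primitive hc2 (hgi.mono_set (Ioc_subset_Ioc_left hc1)),
      ← intervalIntegral.integral_neg]
    congr 1; ext t; ring
  -- combine
  have hgK : IntegrableOn (fun t => g t * Kf b c t) (Ioc b (b+1)) := by
    apply Integrable.mono' (hgi.norm.const_mul ((b+1)^2))
    · exact hgi.aestronglyMeasurable.mul (Kf_measurable b c).aestronglyMeasurable
    · filter_upwards [ae_restrict_mem measurableSet_Ioc] with t ht
      rw [Real.norm_eq_abs, abs_mul, Real.norm_eq_abs, mul_comm]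
      exact mul_le_mul_of_nonneg_right (Kf_bound hb t ⟨ht.1.le, ht.2⟩) (abs_nonneg _)
  have hc3 : ∫ t in b..c, g t * ((t^2 - b^2)/2) = ∫ t in Ioc b c, g t * Kf b c t := by
    rw [intervalIntegral.integral_of_le hc1]
    refine setIntegral_congr_ae measurableSet_Ioc ?_
    refine Filter.Eventually.of_forall fun t ht => ?_
    rw [Kf, if_pos ht.2]
  have hc4 : ∫ t in c..(b+1), g t * ((t^2 - (b+1)^2)/2)
      = ∫ t in Ioc c (b+1), g t * Kf b c t := by
    rw [intervalIntegral.integral_of_le hc2]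
    refine setIntegral_congr_ae measurableSet_Ioc ?_
    refine Filter.Eventually.of_forall fun t ht => ?_
    rw [Kf, if_neg (not_le.mpr ht.1)]
  rw [hA1, hsplit, hP1, hP2, hc3, hc4, ← integral_Ioc_eq_integral_Ioo,
    ← Ioc_union_Ioc_eq_Ioc hc1 hc2]
  rw [setIntegral_union (Ioc_disjoint_Ioc_of_le le_rfl) measurableSet_Ioc
    (hgK.mono_set (Ioc_subset_Ioc_right hc2)) (hgK.mono_set (Ioc_subset_Ioc_left hc1))]

lemma Phi_nonneg {b c : ℝ} (hb : 0 < b) (hc : c ∈ Icc b (b+1)) : 0 ≤ Phi b c := by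
  have h := K_integral hb hc
  have h2 : 0 ≤ ∫ t in Ioo b (b+1), (Kf b c t)^2 / t := by
    apply setIntegral_nonneg measurableSet_Ioo
    intro t ht
    have : 0 < t := lt_trans hb ht.1
    positivity
  rw [h] at h2
  have hM : (0:ℝ) < ((2*b+1)/2)^2 := by positivity
  nlinarith

lemma key (b c : ℝ) (hb : 0 < b) (hc : c ∈ Set.Icc b (b + 1))
    (v g : ℝ → ℝ) (hv : ContinuousOn v (Set.Icc b (b + 1)))
    (hgm : AEStronglyMeasurable g (volume.restrict (Ioo b (b+1))))
    (hg2 : IntegrableOn (fun t => g t ^ 2) (Ioo b (b + 1)))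
    (hvg : ∀ x ∈ Set.Icc b (b + 1), v x = v b + ∫ t in b..x, g t)
    (hmean : (∫ r in b..(b + 1), v r * r) = 0) :
    v c ^ 2 ≤ Phi b c * ∫ t in Ioo b (b+1), g t ^ 2 * t := by
  have hbB : b ≤ b + 1 := by linarith
  -- g is integrable
  have hgi' : IntegrableOn g (Ioo b (b + 1)) := by
    apply Integrable.mono' ((hg2.add (integrable_const 1)).div_const 2)
    · exact hgm
    · filter_upwards [] with t
      simp only [Pi.add_apply]
      rw [Real.norm_eq_abs]
      nlinarith [sq_nonneg (|g t| - 1), sq_abs (g t)]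
  have hgi : IntegrableOn g (Ioc b (b + 1)) := by
    rwa [integrableOn_Ioc_iff_integrableOn_Ioo]
  -- integrabilities on Ioo
  have iA : IntegrableOn (fun t => g t ^ 2 * t) (Ioo b (b+1)) := by
    apply Integrable.mono' (hg2.const_mul (b+1))
    · exact (hg2.aestronglyMeasurable.mul (measurable_id.aestronglyMeasurable))
    · filter_upwards [ae_restrict_mem measurableSet_Ioo] with t ht
      rw [Real.norm_eq_abs, abs_mul]
      have h1 : 0 < t := lt_trans hb ht.1
      rw [abs_of_pos h1, abs_of_nonneg (sq_nonneg _)]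
      nlinarith [sq_nonneg (g t), ht.2]
  have iC : IntegrableOn (fun t => g t * Kf b c t) (Ioo b (b+1)) := by
    apply Integrable.mono' (hgi'.norm.const_mul ((b+1)^2))
    · exact hgm.mul (Kf_measurable b c).aestronglyMeasurable
    · filter_upwards [ae_restrict_mem measurableSet_Ioo] with t ht
      rw [Real.norm_eq_abs, abs_mul, Real.norm_eq_abs, mul_comm]
      exact mul_le_mul_of_nonneg_right (Kf_bound hb t ⟨ht.1.le, ht.2.le⟩) (abs_nonneg _)
  have iB : IntegrableOn (fun t => (Kf b c t)^2 / t) (Ioo b (b+1)) := by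
    apply Integrable.mono' (integrable_const ((b+1)^4/b))
    · exact ((((Kf_measurable b c).pow_const 2).div measurable_id).aestronglyMeasurable)
    · filter_upwards [ae_restrict_mem measurableSet_Ioo] with t ht
      have htpos : 0 < t := lt_trans hb ht.1
      have hK := Kf_bound (c := c) hb t ⟨ht.1.le, ht.2.le⟩
      rw [Real.norm_eq_abs, abs_div, abs_of_pos htpos, abs_pow]
      rw [div_le_div_iff₀ htpos hb]
      have h5 : |Kf b c t|^2 ≤ ((b+1)^2)^2 := by nlinarith [abs_nonneg (Kf b c t)]
      nlinarith [abs_nonneg (Kf b c t), ht.1, hb, sq_nonneg ((b+1)^2)]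
  set A := ∫ t in Ioo b (b+1), g t ^ 2 * t with hA
  set Cc := ∫ t in Ioo b (b+1), g t * Kf b c t with hCc
  set Bq := ∫ t in Ioo b (b+1), (Kf b c t)^2 / t with hBq
  -- quadratic nonnegativity
  have hquad : ∀ lam : ℝ, 0 ≤ A * (lam * lam) + (2 * Cc) * lam + Bq := by
    intro lam
    have expand : A * (lam * lam) + (2 * Cc) * lam + Bq
        = ∫ t in Ioo b (b+1),
            (g t ^ 2 * t * (lam * lam) + 2 * (g t * Kf b c t) * lam + (Kf b c t)^2 / t) := by
      have i1 : IntegrableOn (fun t => g t ^ 2 * t * (lam * lam)) (Ioo b (b+1)) :=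
        iA.mul_const _
      have i2 : IntegrableOn (fun t => 2 * (g t * Kf b c t) * lam) (Ioo b (b+1)) :=
        (iC.const_mul 2).mul_const lam
      have i12 : IntegrableOn
          (fun t => g t ^ 2 * t * (lam * lam) + 2 * (g t * Kf b c t) * lam) (Ioo b (b+1)) :=
        i1.add i2
      rw [integral_add i12 iB, integral_add i1 i2, MeasureTheory.integral_mul_const,
        MeasureTheory.integral_mul_const, MeasureTheory.integral_const_mul]
    rw [expand]
    apply setIntegral_nonneg measurableSet_Ioo
    intro t ht
    have htpos : 0 < t := lt_trans hb ht.1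
    have : g t ^ 2 * t * (lam * lam) + 2 * (g t * Kf b c t) * lam + (Kf b c t)^2 / t
        = t * (lam * g t + Kf b c t / t)^2 := by
      field_simp
      ring
    rw [this]
    positivity
  -- Cauchy-Schwarz via discriminant
  have hdisc := discrim_le_zero hquad
  rw [discrim] at hdisc
  have hcs : Cc ^ 2 ≤ A * Bq := by nlinarith
  -- representation
  have hrep := repr_identity b c hb hc v g hv hgi hvg hmean
  have hKint := K_integral hb hc
  rw [← hCc] at hrep
  rw [← hBq] at hKint
  have hM : (0:ℝ) < ((2*b+1)/2)^2 := by positivity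
  have h1 : v c ^ 2 * ((2*b+1)/2)^2 = Cc ^ 2 := by
    rw [← hrep]; ring
  have h2 : A * Bq = A * (((2*b+1)/2)^2 * Phi b c) := by rw [hKint]
  have hAnn : 0 ≤ A := by
    apply setIntegral_nonneg measurableSet_Ioo
    intro t ht
    have : 0 < t := lt_trans hb ht.1
    positivity
  nlinarith [hcs, h1]

/-- Lemma (pointwise weighted Poincaré inequality): for `b > 0`, `b ≤ c ≤ b+1`, and any
`H¹` function `v` on `[b, b+1]` (with derivative `g`) of mean zero with respect to `r dr`,
one has `v(c)² ≤ Φ(b,c) ∫_b^{b+1} v'(r)² r dr`. -/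
theorem pointwise_poincare (b c : ℝ) (hb : 0 < b) (hc : c ∈ Set.Icc b (b + 1))
    (v g : ℝ → ℝ) (hv : ContinuousOn v (Set.Icc b (b + 1)))
    (hg : MeasureTheory.IntegrableOn (fun t => g t ^ 2) (Set.Ioo b (b + 1)))
    (hvg : ∀ x ∈ Set.Icc b (b + 1), v x = v b + ∫ t in b..x, g t)
    (hmean : (∫ r in b..(b + 1), v r * r) = 0) :
    v c ^ 2 ≤ Phi b c * ∫ r in b..(b + 1), (g r) ^ 2 * r := by
  classical
  have hbB : b ≤ b + 1 := by linarith
  set S : Set ℝ := {x | x ∈ Icc b (b+1) ∧ IntegrableOn g (Ioc b x)} with hS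
  have hbS : b ∈ S := by
    constructor
    · exact left_mem_Icc.mpr hbB
    · rw [Ioc_self]; exact integrableOn_empty
  have hSbdd : BddAbove S := ⟨b+1, fun x hx => hx.1.2⟩
  set m := sSup S with hm
  have hm1 : b ≤ m := le_csSup hSbdd hbS
  have hm2 : m ≤ b + 1 := csSup_le ⟨b, hbS⟩ (fun x hx => hx.1.2)
  have hmIcc : m ∈ Icc b (b+1) := ⟨hm1, hm2⟩
  have F1 : ∀ x, x < m → IntegrableOn g (Ioc b x) := by
    intro x hx
    obtain ⟨y, hyS, hxy⟩ := exists_lt_of_lt_csSup ⟨b, hbS⟩ hx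
    exact hyS.2.mono_set (Ioc_subset_Ioc_right hxy.le)
  have Fnot : ∀ x, x ∈ Icc b (b+1) → m < x → ¬ IntegrableOn g (Ioc b x) := by
    intro x hx hmx hint
    exact absurd (le_csSup hSbdd ⟨hx, hint⟩) (not_le.mpr hmx)
  -- integrability on Ioo b m
  have hIoo : IntegrableOn g (Ioo b m) := by
    rcases eq_or_lt_of_le hm1 with h | h
    · rw [← h, Ioo_self]; exact integrableOn_empty
    · set xs : ℕ → ℝ := fun n => m - (m - b)/(n+1) with hxs
      have hx_lt : ∀ n : ℕ, xs n < m := by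
        intro n
        have : 0 < (m - b)/((n:ℝ)+1) := div_pos (by linarith) (by positivity)
        simp only [hxs]; linarith
      have hx_ge : ∀ n : ℕ, b ≤ xs n := by
        intro n
        have h1 : (m - b)/((n:ℝ)+1) ≤ (m-b) := by
          apply div_le_self (by linarith)
          have : (0:ℝ) ≤ (n:ℝ) := Nat.cast_nonneg n
          linarith
        simp only [hxs]; linarith
      have hunion : (⋃ n : ℕ, Ioc b (xs n)) = Ioo b m := by
        ext t
        simp only [mem_iUnion, mem_Ioc, mem_Ioo]
        constructor
        · rintro ⟨n, h1, h2⟩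
          exact ⟨h1, lt_of_le_of_lt h2 (hx_lt n)⟩
        · rintro ⟨h1, h2⟩
          obtain ⟨n, hn⟩ := exists_nat_ge ((m - b)/(m - t))
          refine ⟨n, h1, ?_⟩
          have hmt : 0 < m - t := by linarith
          have hmb : 0 < m - b := by linarith
          have hn1 : 0 < (n:ℝ) + 1 := by positivity
          have h3 : (m - b)/(m - t) ≤ (n:ℝ) + 1 := by linarith
          have h4 : m - b ≤ ((n:ℝ)+1) * (m - t) := by
            rw [div_le_iff₀ hmt] at h3; linarith
          have h5 : (m - b)/((n:ℝ)+1) ≤ m - t := by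
            rw [div_le_iff₀ hn1]; nlinarith
          simp only [hxs]; linarith
      have hmeas : AEStronglyMeasurable g (volume.restrict (Ioo b m)) := by
        rw [← hunion]
        rw [aestronglyMeasurable_iUnion_iff]
        exact fun n => (F1 (xs n) (hx_lt n)).aestronglyMeasurable
      apply Integrable.mono'
        (((hg.mono_set (Ioo_subset_Ioo_right hm2)).add (integrable_const 1)).div_const 2)
        hmeas
      filter_upwards [] with t
      simp only [Pi.add_apply]
      rw [Real.norm_eq_abs]
      nlinarith [sq_nonneg (|g t| - 1), sq_abs (g t)]
  -- limit identity at m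
  have F2 : v m = v b + ∫ t in Ioo b m, g t := by
    rcases eq_or_lt_of_le hm1 with h | h
    · rw [← h, Ioo_self, MeasureTheory.setIntegral_empty, hvg b (left_mem_Icc.mpr hbB),
        intervalIntegral.integral_same]
      ring
    · set xs : ℕ → ℝ := fun n => m - (m - b)/(n+1) with hxs
      have hx_lt : ∀ n : ℕ, xs n < m := by
        intro n
        have : 0 < (m - b)/((n:ℝ)+1) := div_pos (by linarith) (by positivity)
        simp only [hxs]; linarith
      have hx_ge : ∀ n : ℕ, b ≤ xs n := by
        intro n
        have h1 : (m - b)/((n:ℝ)+1) ≤ (m-b) := by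
          apply div_le_self (by linarith)
          have : (0:ℝ) ≤ (n:ℝ) := Nat.cast_nonneg n
          linarith
        simp only [hxs]; linarith
      have hunion : (⋃ n : ℕ, Ioc b (xs n)) = Ioo b m := by
        ext t
        simp only [mem_iUnion, mem_Ioc, mem_Ioo]
        constructor
        · rintro ⟨n, h1, h2⟩
          exact ⟨h1, lt_of_le_of_lt h2 (hx_lt n)⟩
        · rintro ⟨h1, h2⟩
          obtain ⟨n, hn⟩ := exists_nat_ge ((m - b)/(m - t))
          refine ⟨n, h1, ?_⟩
          have hmt : 0 < m - t := by linarith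
          have hmb : 0 < m - b := by linarith
          have hn1 : 0 < (n:ℝ) + 1 := by positivity
          have h3 : (m - b)/(m - t) ≤ (n:ℝ) + 1 := by linarith
          have h4 : m - b ≤ ((n:ℝ)+1) * (m - t) := by
            rw [div_le_iff₀ hmt] at h3; linarith
          have h5 : (m - b)/((n:ℝ)+1) ≤ m - t := by
            rw [div_le_iff₀ hn1]; nlinarith
          simp only [hxs]; linarith
      have hmono : Monotone (fun n : ℕ => Ioc b (xs n)) := by
        intro i j hij
        apply Ioc_subset_Ioc_right
        simp only [hxs]
        have h1 : (m - b)/((j:ℝ)+1) ≤ (m - b)/((i:ℝ)+1) := by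
          apply div_le_div_of_nonneg_left (by linarith) (by positivity)
          have := (Nat.cast_le (α := ℝ)).mpr hij
          linarith
        linarith
      have htend1 : Filter.Tendsto (fun n : ℕ => ∫ t in Ioc b (xs n), g t) Filter.atTop
          (nhds (∫ t in Ioo b m, g t)) := by
        have := tendsto_setIntegral_of_monotone (fun n : ℕ => measurableSet_Ioc) hmono
          (by rw [hunion]; exact hIoo)
        rwa [hunion] at this
      have hxs_tend : Filter.Tendsto xs Filter.atTop (nhds m) := by
        have h0 : Filter.Tendsto (fun n : ℕ => (m - b)/((n:ℝ)+1)) Filter.atTop (nhds 0) := by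
          have := tendsto_one_div_add_atTop_nhds_zero_nat.const_mul (m - b)
          simp only [mul_one_div, mul_zero] at this
          exact this
        have := Filter.Tendsto.sub (tendsto_const_nhds (x := m)) h0
        simpa using this
      have htend2 : Filter.Tendsto (fun n : ℕ => v (xs n)) Filter.atTop (nhds (v m)) := by
        have hcw : ContinuousWithinAt v (Icc b (b+1)) m := hv.continuousWithinAt hmIcc
        apply hcw.tendsto.comp
        apply tendsto_nhdsWithin_of_tendsto_nhds_of_eventually_within _ hxs_tend
        filter_upwards [] with n
        exact ⟨hx_ge n, le_trans (hx_lt n).le hm2⟩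
      have heq : ∀ n : ℕ, v (xs n) = v b + ∫ t in Ioc b (xs n), g t := by
        intro n
        rw [hvg (xs n) ⟨hx_ge n, le_trans (hx_lt n).le hm2⟩,
          intervalIntegral.integral_of_le (hx_ge n)]
      have htend3 : Filter.Tendsto (fun n : ℕ => v (xs n)) Filter.atTop
          (nhds (v b + ∫ t in Ioo b m, g t)) := by
        simp_rw [heq]
        exact (tendsto_const_nhds.add htend1)
      exact tendsto_nhds_unique htend2 htend3
  have F3 : ∀ x, x ∈ Icc b (b+1) → m < x → v x = v b := by
    intro x hx hmx
    rw [hvg x hx, intervalIntegral.integral_of_le hx.1]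
    rw [MeasureTheory.integral_undef (Fnot x hx hmx)]
    ring
  have F4 : m < b + 1 → (∫ t in Ioo b m, g t) = 0 := by
    intro hmlt
    set ys : ℕ → ℝ := fun n => m + (b + 1 - m)/(n+1) with hys
    have hy_gt : ∀ n : ℕ, m < ys n := by
      intro n
      have : 0 < (b + 1 - m)/((n:ℝ)+1) := div_pos (by linarith) (by positivity)
      simp only [hys]; linarith
    have hy_le : ∀ n : ℕ, ys n ≤ b + 1 := by
      intro n
      have h1 : (b + 1 - m)/((n:ℝ)+1) ≤ (b + 1 - m) := by
        apply div_le_self (by linarith)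
        have : (0:ℝ) ≤ (n:ℝ) := Nat.cast_nonneg n
        linarith
      simp only [hys]; linarith
    have hys_tend : Filter.Tendsto ys Filter.atTop (nhds m) := by
      have h0 : Filter.Tendsto (fun n : ℕ => (b + 1 - m)/((n:ℝ)+1)) Filter.atTop (nhds 0) := by
        have := tendsto_one_div_add_atTop_nhds_zero_nat.const_mul (b + 1 - m)
        simp only [mul_one_div, mul_zero] at this
        exact this
      have := Filter.Tendsto.add (tendsto_const_nhds (x := m)) h0
      simpa using this
    have htend2 : Filter.Tendsto (fun n : ℕ => v (ys n)) Filter.atTop (nhds (v m)) := by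
      have hcw : ContinuousWithinAt v (Icc b (b+1)) m := hv.continuousWithinAt hmIcc
      apply hcw.tendsto.comp
      apply tendsto_nhdsWithin_of_tendsto_nhds_of_eventually_within _ hys_tend
      filter_upwards [] with n
      exact ⟨le_trans hm1 (hy_gt n).le, hy_le n⟩
    have heq : ∀ n : ℕ, v (ys n) = v b :=
      fun n => F3 (ys n) ⟨le_trans hm1 (hy_gt n).le, hy_le n⟩ (hy_gt n)
    have htend3 : Filter.Tendsto (fun n : ℕ => v (ys n)) Filter.atTop (nhds (v b)) := by
      simp_rw [heq]; exact tendsto_const_nhds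
    have hvm : v m = v b := tendsto_nhds_unique htend2 htend3
    have := F2
    rw [hvm] at this
    linarith
  -- the measurable substitute
  set gt : ℝ → ℝ := (Ioo b m).indicator g with hgt
  have hgt_int : Integrable gt volume := by
    rw [hgt, integrable_indicator_iff measurableSet_Ioo]
    exact hIoo
  have hgt_eq : ∀ x, b ≤ x → (∫ t in b..x, gt t) = ∫ t in Ioc b x ∩ Ioo b m, g t := by
    intro x hx
    rw [intervalIntegral.integral_of_le hx, hgt, setIntegral_indicator measurableSet_Ioo]
  have hvg' : ∀ x ∈ Icc b (b+1), v x = v b + ∫ t in b..x, gt t := by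
    intro x hx
    rcases lt_trichotomy x m with h | h | h
    · rw [hgt_eq x hx.1]
      have hsub : Ioc b x ∩ Ioo b m = Ioc b x := by
        apply inter_eq_left.mpr
        intro t ht
        exact ⟨ht.1, lt_of_le_of_lt ht.2 h⟩
      rw [hsub, ← intervalIntegral.integral_of_le hx.1, ← hvg x hx]
    · rw [hgt_eq x hx.1, h]
      have hsub : Ioc b m ∩ Ioo b m = Ioo b m := by
        apply inter_eq_right.mpr
        intro t ht
        exact ⟨ht.1, ht.2.le⟩
      rw [hsub]
      exact F2
    · rw [hgt_eq x hx.1]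
      have hsub : Ioc b x ∩ Ioo b m = Ioo b m := by
        apply inter_eq_right.mpr
        intro t ht
        exact ⟨ht.1, le_trans ht.2.le (le_of_lt h)⟩
      rw [hsub, F4 (lt_of_lt_of_le h hx.2), F3 x hx h]
      ring
  have hgt2 : IntegrableOn (fun t => gt t ^ 2) (Ioo b (b+1)) := by
    have : (fun t => gt t ^ 2) = (Ioo b m).indicator (fun t => g t ^ 2) := by
      ext t
      by_cases h : t ∈ Ioo b m <;> simp [hgt, indicator_apply, h]
    rw [this]
    exact hg.indicator measurableSet_Ioo
  have hgtm : AEStronglyMeasurable gt (volume.restrict (Ioo b (b+1))) :=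
    hgt_int.aestronglyMeasurable.restrict
  -- apply the key lemma
  have hkey := key b c hb hc v gt hv hgtm hgt2 hvg' hmean
  -- compare integrals
  have hmono : (∫ t in Ioo b (b+1), gt t ^ 2 * t) ≤ ∫ t in Ioo b (b+1), g t ^ 2 * t := by
    apply setIntegral_mono_on
    · apply Integrable.mono' (hgt2.const_mul (b+1))
      · exact hgt2.aestronglyMeasurable.mul measurable_id.aestronglyMeasurable
      · filter_upwards [ae_restrict_mem measurableSet_Ioo] with t ht
        rw [Real.norm_eq_abs, abs_mul, abs_of_pos (lt_trans hb ht.1),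
          abs_of_nonneg (sq_nonneg _)]
        nlinarith [sq_nonneg (gt t), ht.2]
    · apply Integrable.mono' (hg.const_mul (b+1))
      · exact hg.aestronglyMeasurable.mul measurable_id.aestronglyMeasurable
      · filter_upwards [ae_restrict_mem measurableSet_Ioo] with t ht
        rw [Real.norm_eq_abs, abs_mul, abs_of_pos (lt_trans hb ht.1),
          abs_of_nonneg (sq_nonneg _)]
        nlinarith [sq_nonneg (g t), ht.2]
    · exact measurableSet_Ioo
    · intro t ht
      have htpos : 0 < t := lt_trans hb ht.1
      have : gt t ^ 2 ≤ g t ^ 2 := by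
        rw [hgt]
        by_cases h : t ∈ Ioo b m
        · simp [indicator_apply, h]
        · simp [indicator_apply, h]; positivity
      nlinarith
  have hfinal : (∫ r in b..(b + 1), (g r) ^ 2 * r) = ∫ t in Ioo b (b+1), g t ^ 2 * t := by
    rw [intervalIntegral.integral_of_le hbB, integral_Ioc_eq_integral_Ioo]
  rw [hfinal]
  calc v c ^ 2 ≤ Phi b c * ∫ t in Ioo b (b+1), gt t ^ 2 * t := hkey
    _ ≤ Phi b c * ∫ t in Ioo b (b+1), g t ^ 2 * t :=
        mul_le_mul_of_nonneg_left hmono (Phi_nonneg hb hc)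
end

section
/- Let 0 ≤ α < 1. Then there exists a constant S_α > 0 such that for every b > 0 and every H¹ function v on [b,b+1] satisfying ∫_b^{b+1} v(r)·r dr = 0, one has max_{b ≤ r ≤ b+1} v(r)²·r^{1−α} ≤ S_α · ∫_b^{b+1} v'(r)² · r dr. -/
open MeasureTheory Set

lemma sqrt_add_le' (x y : ℝ) (hx : 0 ≤ x) (hy : 0 ≤ y) :
    Real.sqrt (x + y) ≤ Real.sqrt x + Real.sqrt y := by
  rw [show x + y = Real.sqrt x ^ 2 + Real.sqrt y ^ 2 by
    rw [Real.sq_sqrt hx, Real.sq_sqrt hy]]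
  have h1 := Real.sqrt_nonneg x
  have h2 := Real.sqrt_nonneg y
  have : Real.sqrt x ^ 2 + Real.sqrt y ^ 2 ≤ (Real.sqrt x + Real.sqrt y) ^ 2 := by nlinarith
  calc Real.sqrt (Real.sqrt x ^ 2 + Real.sqrt y ^ 2)
      ≤ Real.sqrt ((Real.sqrt x + Real.sqrt y) ^ 2) := Real.sqrt_le_sqrt this
    _ = Real.sqrt x + Real.sqrt y := by rw [Real.sqrt_sq (by positivity)]


lemma absg_integrable (b : ℝ) (g : ℝ → ℝ)
    (hg2 : IntegrableOn (fun t => g t ^ 2) (Ioo b (b + 1))) :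
    IntegrableOn (fun t => |g t|) (Ioc b (b + 1)) := by
  have hres : volume.restrict (Ioc b (b+1)) = volume.restrict (Ioo b (b+1)) :=
    Measure.restrict_congr_set (μ := volume) Ioo_ae_eq_Ioc.symm
  have hg2' : IntegrableOn (fun t => g t ^ 2) (Ioc b (b + 1)) := by
    rw [IntegrableOn, hres]; exact hg2
  have hmeas : AEStronglyMeasurable (fun t => |g t|) (volume.restrict (Ioc b (b+1))) := by
    have : (fun t => |g t|) = fun t => Real.sqrt (g t ^ 2) := by
      funext t; rw [Real.sqrt_sq_eq_abs]
    rw [this]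
    exact Real.continuous_sqrt.comp_aestronglyMeasurable hg2'.aestronglyMeasurable
  refine Integrable.mono' (g := fun t => (1 + g t ^ 2)/2) ?_ hmeas ?_
  · exact (((integrable_const (1:ℝ)).add hg2').div_const 2)
  · filter_upwards with t
    rw [Real.norm_eq_abs, abs_abs]
    nlinarith [sq_nonneg (|g t| - 1), sq_abs (g t)]

lemma lemQ (b : ℝ) (hb : 0 < b) (v g : ℝ → ℝ)
    (hv_cont : ContinuousOn v (Icc b (b + 1)))
    (hg2 : IntegrableOn (fun t => g t ^ 2) (Ioo b (b + 1)))
    (hv : ∀ x ∈ Icc b (b + 1), v x = v b + ∫ t in b..x, g t) :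
    ∀ x ∈ Icc b (b + 1), ∀ y ∈ Icc b (b + 1), x ≤ y →
      |v y - v x| ≤ ∫ t in Ioc x y, |g t| := by
  have habs : IntegrableOn (fun t => |g t|) (Ioc b (b + 1)) := absg_integrable b g hg2
  have hg2' : IntegrableOn (fun t => g t ^ 2) (Ioc b (b + 1)) := by
    rw [IntegrableOn, Measure.restrict_congr_set (μ := volume) Ioo_ae_eq_Ioc.symm]; exact hg2
  -- integrability from AESM
  have hInt : ∀ x, b ≤ x → x ≤ b + 1 →
      AEStronglyMeasurable g (volume.restrict (Ioc b x)) → IntegrableOn g (Ioc b x) := by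
    intro x hbx hxb hm
    refine Integrable.mono' (g := fun t => (1 + g t ^ 2)/2) ?_ hm ?_
    · exact MeasureTheory.IntegrableOn.mono_set
        (((integrable_const (1:ℝ)).add hg2').div_const 2) (Ioc_subset_Ioc_right hxb)
    · filter_upwards with t
      rw [Real.norm_eq_abs]
      nlinarith [sq_nonneg (|g t| - 1), sq_abs (g t), abs_nonneg (g t)]
  set A : Set ℝ := {x | x ∈ Icc b (b+1) ∧ IntegrableOn g (Ioc b x)} with hA
  have hbA : b ∈ A := ⟨⟨le_refl b, by linarith⟩, by rw [Ioc_self]; exact integrableOn_empty⟩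
  have hbdd : BddAbove A := ⟨b + 1, fun x hx => hx.1.2⟩
  set c := sSup A with hc
  have hbc : b ≤ c := le_csSup hbdd hbA
  have hcb1 : c ≤ b + 1 := csSup_le ⟨b, hbA⟩ fun x hx => hx.1.2
  have hlt : ∀ x, b ≤ x → x < c → IntegrableOn g (Ioc b x) := by
    intro x hbx hxc
    obtain ⟨y, hyA, hxy⟩ := exists_lt_of_lt_csSup ⟨b, hbA⟩ hxc
    exact hyA.2.mono_set (Ioc_subset_Ioc_right hxy.le)
  have hcA : IntegrableOn g (Ioc b c) := by
    rcases eq_or_lt_of_le hbc with h | h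
    · rw [← h, Ioc_self]; exact integrableOn_empty
    · have hunion : Ioo b c = ⋃ n : ℕ, Ioc b (c - (c - b) * (1 / (n + 1))) := by
        ext z
        simp only [mem_Ioo, mem_iUnion, mem_Ioc]
        constructor
        · rintro ⟨h1, h2⟩
          obtain ⟨n, hn⟩ := exists_nat_gt ((c - b) / (c - z))
          refine ⟨n, h1, ?_⟩
          have hcz : 0 < c - z := by linarith
          rw [div_lt_iff₀ hcz] at hn
          have : (c - b) * (1 / (n + 1)) < c - z := by
            rw [mul_one_div, div_lt_iff₀ (by positivity)]
            nlinarith [hcz.le]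
          linarith
        · rintro ⟨n, h1, h2⟩
          have : 0 < (c - b) * (1 / (n + 1)) := mul_pos (by linarith) (by positivity)
          exact ⟨h1, by linarith⟩
      have hmeas : AEStronglyMeasurable g (volume.restrict (Ioo b c)) := by
        rw [hunion]
        rw [aestronglyMeasurable_iUnion_iff]
        intro n
        have h1 : (0:ℝ) < (c - b) * (1 / (n + 1)) := mul_pos (by linarith) (by positivity)
        have h2 : (c - b) * (1 / (n + 1)) ≤ c - b := by
          rw [mul_one_div]
          apply div_le_self (by linarith)
          have : (0:ℝ) ≤ n := Nat.cast_nonneg n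
          linarith
        exact (hlt _ (by linarith) (by linarith)).aestronglyMeasurable
      have : AEStronglyMeasurable g (volume.restrict (Ioc b c)) := by
        rwa [Measure.restrict_congr_set (μ := volume) Ioo_ae_eq_Ioc] at hmeas
      exact hInt c hbc hcb1 this
  have hgt : ∀ x, x ∈ Icc b (b+1) → c < x → v x = v b := by
    intro x hx hcx
    have hni : ¬ IntegrableOn g (Ioc b x) := fun h =>
      absurd (le_csSup hbdd ⟨hx, h⟩) (not_le.2 hcx)
    have : ¬ IntervalIntegrable g volume b x := by
      rw [intervalIntegrable_iff_integrableOn_Ioc_of_le hx.1]; exact hni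
    rw [hv x hx, intervalIntegral.integral_undef this, add_zero]
  have hvc : c < b + 1 → v c = v b := by
    intro hcb
    have hseq : Filter.Tendsto (fun n : ℕ => c + (b + 1 - c) * (1 / (n + 1))) Filter.atTop
        (nhdsWithin c (Icc b (b+1))) := by
      apply tendsto_nhdsWithin_of_tendsto_nhds_of_eventually_within
      · have : Filter.Tendsto (fun n : ℕ => 1 / ((n : ℝ) + 1)) Filter.atTop (nhds 0) :=
          tendsto_one_div_add_atTop_nhds_zero_nat
        have h2 := this.const_mul (b + 1 - c)
        simpa using Filter.Tendsto.const_add c h2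
      · filter_upwards with n
        have h1 : (0:ℝ) < (b + 1 - c) * (1 / (n + 1)) := by
          have : (0:ℝ) < b + 1 - c := by linarith
          positivity
        have h2 : (b + 1 - c) * (1 / (n + 1)) ≤ b + 1 - c := by
          rw [mul_one_div]
          apply div_le_self (by linarith)
          have : (0:ℝ) ≤ n := Nat.cast_nonneg n
          linarith
        exact ⟨by linarith, by linarith⟩
    have hcont := (hv_cont c ⟨hbc, hcb1⟩).tendsto.comp hseq
    have heq : ∀ n : ℕ, v (c + (b + 1 - c) * (1 / (n + 1))) = v b := by
      intro n
      have h1 : (0:ℝ) < (b + 1 - c) * (1 / (n + 1)) := by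
        have : (0:ℝ) < b + 1 - c := by linarith
        positivity
      have h2 : (b + 1 - c) * (1 / (n + 1)) ≤ b + 1 - c := by
        rw [mul_one_div]
        apply div_le_self (by linarith)
        simp only [le_add_iff_nonneg_left]
        positivity
      exact hgt _ ⟨by linarith, by linarith⟩ (by linarith)
    exact tendsto_nhds_unique (hcont.congr heq) tendsto_const_nhds
  -- key for y ≤ c
  have key : ∀ x ∈ Icc b (b+1), ∀ y, x ≤ y → y ≤ c → y ≤ b + 1 →
      |v y - v x| ≤ ∫ t in Ioc x y, |g t| := by
    intro x hx y hxy hyc hyb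
    have hby : b ≤ y := le_trans hx.1 hxy
    have hIy : IntegrableOn g (Ioc b y) := hcA.mono_set (Ioc_subset_Ioc_right hyc)
    have hIx : IntegrableOn g (Ioc b x) := hIy.mono_set (Ioc_subset_Ioc_right hxy)
    have h1 : IntervalIntegrable g volume b y := by
      rw [intervalIntegrable_iff_integrableOn_Ioc_of_le hby]; exact hIy
    have h2 : IntervalIntegrable g volume b x := by
      rw [intervalIntegrable_iff_integrableOn_Ioc_of_le hx.1]; exact hIx
    have hdiff : v y - v x = ∫ t in x..y, g t := by
      rw [hv y ⟨hby, hyb⟩, hv x hx]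
      rw [show v b + (∫ t in b..y, g t) - (v b + ∫ t in b..x, g t)
          = (∫ t in b..y, g t) - ∫ t in b..x, g t from by ring]
      exact intervalIntegral.integral_interval_sub_left h1 h2
    rw [hdiff]
    calc |∫ t in x..y, g t| ≤ ∫ t in x..y, |g t| :=
          intervalIntegral.abs_integral_le_integral_abs hxy
      _ = ∫ t in Ioc x y, |g t| := intervalIntegral.integral_of_le hxy
  intro x hx y hy hxy
  by_cases hyc : y ≤ c
  · exact key x hx y hxy hyc hy.2
  · push_neg at hyc
    by_cases hxc : x ≤ c
    · have hcb : c < b + 1 := lt_of_lt_of_le hyc hy.2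
      have hvy : v y = v c := by rw [hgt y hy hyc, hvc hcb]
      rw [hvy]
      calc |v c - v x| ≤ ∫ t in Ioc x c, |g t| := key x hx c hxc le_rfl hcb1
        _ ≤ ∫ t in Ioc x y, |g t| := by
            apply setIntegral_mono_set
            · exact habs.mono_set (Ioc_subset_Ioc hx.1 hy.2)
            · filter_upwards with t using abs_nonneg _
            · exact HasSubset.Subset.eventuallyLE (Ioc_subset_Ioc_right hyc.le)
    · push_neg at hxc
      rw [hgt y hy hyc, hgt x hx hxc, sub_self, abs_zero]
      exact setIntegral_nonneg measurableSet_Ioc fun t _ => abs_nonneg _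

lemma wint (b : ℝ) (g : ℝ → ℝ)
    (hg2 : IntegrableOn (fun t => g t ^ 2) (Ioo b (b + 1))) :
    IntegrableOn (fun t => g t ^ 2 * t) (Ioc b (b + 1)) := by
  have hg2' : IntegrableOn (fun t => g t ^ 2) (Ioc b (b + 1)) := by
    rw [IntegrableOn, Measure.restrict_congr_set (μ := volume) Ioo_ae_eq_Ioc.symm]; exact hg2
  refine Integrable.mono' (g := fun t => (|b| + 1) * g t ^ 2) (hg2'.const_mul _) ?_ ?_
  · exact hg2'.aestronglyMeasurable.mul aestronglyMeasurable_id
  · filter_upwards [ae_restrict_mem measurableSet_Ioc] with t ht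
    rw [Real.norm_eq_abs, abs_mul, abs_of_nonneg (sq_nonneg (g t))]
    have h1 : |t| ≤ |b| + 1 := by
      rw [abs_le]
      have := le_abs_self b
      have := neg_abs_le b
      exact ⟨by nlinarith [ht.1], by nlinarith [ht.2]⟩
    nlinarith [sq_nonneg (g t), mul_le_mul_of_nonneg_left h1 (sq_nonneg (g t))]

lemma lemP (b x y : ℝ) (hb : 0 < b) (g : ℝ → ℝ)
    (hg2 : IntegrableOn (fun t => g t ^ 2) (Ioo b (b + 1)))
    (hx : b ≤ x) (hxy : x ≤ y) (hy : y ≤ b + 1) :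
    (∫ t in Ioc x y, |g t|) ^ 2 ≤
      (Real.log y - Real.log x) * ∫ t in Ioo b (b + 1), g t ^ 2 * t := by
  have hx0 : 0 < x := lt_of_lt_of_le hb hx
  have hy0 : 0 < y := lt_of_lt_of_le hx0 hxy
  set μ := volume.restrict (Ioc x y) with hμ
  set f : ℝ → ℝ := fun t => (Real.sqrt t)⁻¹ with hf
  set h : ℝ → ℝ := fun t => Real.sqrt t * |g t| with hh
  have hsub : Ioc x y ⊆ Ioc b (b + 1) := Ioc_subset_Ioc hx hy
  have habs : IntegrableOn (fun t => |g t|) (Ioc x y) :=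
    (absg_integrable b g hg2).mono_set hsub
  have hw : IntegrableOn (fun t => g t ^ 2 * t) (Ioc x y) := (wint b g hg2).mono_set hsub
  -- f measurability and f^2 integrable
  have hfm : AEStronglyMeasurable f μ :=
    (Real.continuous_sqrt.measurable.inv).aestronglyMeasurable
  have hf2 : Integrable (fun t => f t ^ 2) μ := by
    have hcont : ContinuousOn (fun t => f t ^ 2) (Icc x y) := by
      apply ContinuousOn.pow
      apply ContinuousOn.inv₀ (Real.continuous_sqrt.continuousOn)
      intro t ht
      exact Real.sqrt_ne_zero'.mpr (lt_of_lt_of_le hx0 ht.1)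
    exact (hcont.integrableOn_Icc).mono_set Ioc_subset_Icc_self
  have hMf : MemLp f (ENNReal.ofReal 2) μ := by
    rw [show ENNReal.ofReal 2 = 2 by norm_num]
    exact (memLp_two_iff_integrable_sq hfm).mpr hf2
  -- h measurability and h^2 integrable
  have hhm : AEStronglyMeasurable h μ := by
    apply AEStronglyMeasurable.mul (Real.continuous_sqrt.aestronglyMeasurable)
    exact habs.aestronglyMeasurable
  have hh2 : Integrable (fun t => h t ^ 2) μ := by
    apply hw.congr
    filter_upwards [ae_restrict_mem measurableSet_Ioc] with t ht
    have ht0 : 0 ≤ t := le_of_lt (lt_of_le_of_lt hx0.le ht.1)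
    rw [hh]
    simp only [mul_pow, sq_abs, Real.sq_sqrt ht0]
    ring
  have hMh : MemLp h (ENNReal.ofReal 2) μ := by
    rw [show ENNReal.ofReal 2 = 2 by norm_num]
    exact (memLp_two_iff_integrable_sq hhm).mpr hh2
  have hCS := MeasureTheory.integral_mul_le_Lp_mul_Lq_of_nonneg
    (Real.HolderConjugate.two_two) ?_ ?_ hMf hMh
  · have hfh : ∫ a, f a * h a ∂μ = ∫ t in Ioc x y, |g t| := by
      apply integral_congr_ae
      filter_upwards [ae_restrict_mem measurableSet_Ioc] with t ht
      have ht0 : 0 < t := lt_of_le_of_lt hx0.le ht.1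
      rw [hf, hh]
      field_simp [Real.sqrt_ne_zero'.mpr ht0]
    have hA : ∫ a, f a ^ (2:ℝ) ∂μ = Real.log y - Real.log x := by
      have he : ∀ᵐ t ∂μ, f t ^ (2:ℝ) = t⁻¹ := by
        filter_upwards [ae_restrict_mem measurableSet_Ioc] with t ht
        have ht0 : 0 < t := lt_of_le_of_lt hx0.le ht.1
        rw [Real.rpow_two, hf, inv_pow, Real.sq_sqrt ht0.le]
      rw [integral_congr_ae he, hμ,
        show ∫ t in Ioc x y, t⁻¹ = ∫ t in x..y, t⁻¹ from
          (intervalIntegral.integral_of_le hxy).symm,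
        integral_inv (by
          intro hmem
          rw [uIcc_of_le hxy] at hmem
          exact absurd hmem.1 (not_le.2 hx0)),
        Real.log_div hy0.ne' hx0.ne']
    have hB : ∫ a, h a ^ (2:ℝ) ∂μ = ∫ t in Ioc x y, g t ^ 2 * t := by
      apply integral_congr_ae
      filter_upwards [ae_restrict_mem measurableSet_Ioc] with t ht
      have ht0 : 0 < t := lt_of_le_of_lt hx0.le ht.1
      rw [Real.rpow_two, hh, mul_pow, sq_abs, Real.sq_sqrt ht0.le]
      ring
    have hBle : ∫ t in Ioc x y, g t ^ 2 * t ≤ ∫ t in Ioo b (b + 1), g t ^ 2 * t := by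
      rw [setIntegral_congr_set (μ := volume) Ioo_ae_eq_Ioc]
      apply setIntegral_mono_set (wint b g hg2)
      · filter_upwards [ae_restrict_mem measurableSet_Ioc] with t ht
        have : 0 < t := lt_of_le_of_lt hb.le ht.1
        positivity
      · exact HasSubset.Subset.eventuallyLE hsub
    have hL : 0 ≤ ∫ t in Ioc x y, |g t| :=
      setIntegral_nonneg measurableSet_Ioc fun t _ => abs_nonneg _
    have hA0 : 0 ≤ Real.log y - Real.log x :=
      sub_nonneg.2 (Real.log_le_log hx0 hxy)
    have hB0 : 0 ≤ ∫ t in Ioc x y, g t ^ 2 * t := by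
      apply setIntegral_nonneg measurableSet_Ioc
      intro t ht
      have : 0 < t := lt_of_le_of_lt hx0.le ht.1
      positivity
    calc (∫ t in Ioc x y, |g t|) ^ 2
        ≤ ((Real.log y - Real.log x) ^ ((1:ℝ)/2) *
            (∫ t in Ioc x y, g t ^ 2 * t) ^ ((1:ℝ)/2)) ^ 2 := by
          apply pow_le_pow_left₀ hL
          rw [← hfh, ← hA, ← hB]
          exact hCS
      _ = (Real.log y - Real.log x) * ∫ t in Ioc x y, g t ^ 2 * t := by
          rw [← Real.sqrt_eq_rpow, ← Real.sqrt_eq_rpow, mul_pow,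
            Real.sq_sqrt hA0, Real.sq_sqrt hB0]
      _ ≤ (Real.log y - Real.log x) * ∫ t in Ioo b (b + 1), g t ^ 2 * t :=
          mul_le_mul_of_nonneg_left hBle hA0
  · -- nonneg f
    filter_upwards [ae_restrict_mem measurableSet_Ioc] with t _
    simp only [Pi.zero_apply, hf]
    positivity
  · -- nonneg h
    filter_upwards [ae_restrict_mem measurableSet_Ioc] with t _
    simp only [Pi.zero_apply, hh]
    positivity

set_option maxHeartbeats 1000000 in
/-- The weighted Poincaré–Sobolev inequality: for every `0 ≤ α < 1` there is a constant
`S_α > 0` such that for all `b > 0` and all `H¹` functions `v` on `[b, b+1]` (with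
derivative `g`) of mean zero with respect to `r dr`, one has
`max_{b ≤ r ≤ b+1} v(r)² r^(1-α) ≤ S_α ∫_b^{b+1} v'(r)² r dr`. -/
theorem poincare_sobolev (α : ℝ) (hα0 : 0 ≤ α) (hα1 : α < 1) :
    ∃ S : ℝ, 0 < S ∧ ∀ b : ℝ, 0 < b → ∀ v g : ℝ → ℝ,
      ContinuousOn v (Set.Icc b (b + 1)) →
      MeasureTheory.IntegrableOn (fun t => g t ^ 2) (Set.Ioo b (b + 1)) →
      (∀ x ∈ Set.Icc b (b + 1), v x = v b + ∫ t in b..x, g t) →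
      (∫ r in b..(b + 1), v r * r) = 0 →
      ∀ r ∈ Set.Icc b (b + 1),
        v r ^ 2 * r ^ (1 - α) ≤ S * ∫ r in b..(b + 1), (g r) ^ 2 * r := by
  have hβ : 0 < 1 - α := by linarith
  refine ⟨200 + 2 / (1 - α), by positivity, ?_⟩
  intro b hb v g hv_cont hg2 hv hmean r hr
  have hb1 : b ≤ b + 1 := by linarith
  have hr0 : 0 < r := lt_of_lt_of_le hb hr.1
  set I : ℝ := ∫ t in Ioo b (b + 1), g t ^ 2 * t with hI
  have hI0 : 0 ≤ I := setIntegral_nonneg measurableSet_Ioo fun t ht => by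
    have : 0 < t := lt_trans hb ht.1
    positivity
  have hRHS : (∫ t in b..(b + 1), g t ^ 2 * t) = I := by
    rw [intervalIntegral.integral_of_le hb1, hI,
      setIntegral_congr_set (μ := volume) Ioo_ae_eq_Ioc]
  rw [hRHS]
  clear_value I
  -- pointwise estimate
  have hP' : ∀ s ∈ Icc b (b + 1), (v r - v s) ^ 2 ≤ |Real.log r - Real.log s| * I := by
    intro s hs
    have hs0 : 0 < s := lt_of_lt_of_le hb hs.1
    have hQ := lemQ b hb v g hv_cont hg2 hv
    rcases le_total s r with h | h
    · calc (v r - v s) ^ 2 = |v r - v s| ^ 2 := (sq_abs _).symm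
        _ ≤ (∫ t in Ioc s r, |g t|) ^ 2 :=
            pow_le_pow_left₀ (abs_nonneg _) (hQ s hs r hr h) 2
        _ ≤ (Real.log r - Real.log s) * I := by rw [hI]; exact lemP b s r hb g hg2 hs.1 h hr.2
        _ = |Real.log r - Real.log s| * I := by
            rw [abs_of_nonneg (sub_nonneg.2 (Real.log_le_log hs0 h))]
    · calc (v r - v s) ^ 2 = |v s - v r| ^ 2 := by rw [sq_abs]; ring
        _ ≤ (∫ t in Ioc r s, |g t|) ^ 2 :=
            pow_le_pow_left₀ (abs_nonneg _) (hQ r hr s hs h) 2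
        _ ≤ (Real.log s - Real.log r) * I := by rw [hI]; exact lemP b r s hb g hg2 hr.1 h hs.2
        _ = |Real.log r - Real.log s| * I := by
            rw [abs_sub_comm, abs_of_nonneg (sub_nonneg.2 (Real.log_le_log hr0 h))]
  -- representation
  have hvint : IntervalIntegrable (fun s => v s * s) volume b (b + 1) := by
    apply ContinuousOn.intervalIntegrable
    rw [uIcc_of_le hb1]
    exact hv_cont.mul continuous_id.continuousOn
  have hrep : v r * (b + 1 / 2) = ∫ s in b..(b + 1), (v r - v s) * s := by
    have h1 : IntervalIntegrable (fun s => v r * s) volume b (b + 1) :=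
      (continuous_const.mul continuous_id).intervalIntegrable _ _
    have h2 : (∫ s in b..(b + 1), (v r - v s) * s)
        = ∫ s in b..(b + 1), (v r * s - v s * s) := by
      apply intervalIntegral.integral_congr
      intro s _
      ring
    rw [h2, intervalIntegral.integral_sub h1 hvint, hmean, sub_zero,
      intervalIntegral.integral_const_mul, integral_id]
    ring
  -- a generic averaging bound
  have hWpos : (0:ℝ) < b + 1 / 2 := by linarith
  have havg : ∀ C D : ℝ, (∀ s ∈ Icc b (b + 1), |v r - v s| * s ≤ C * s + D) →
      |v r| * (b + 1 / 2) ≤ C * (b + 1 / 2) + D := by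
    intro C D hK
    have hmono : |v r * (b + 1 / 2)| ≤ C * (b + 1 / 2) + D := by
      rw [hrep]
      calc |∫ s in b..(b + 1), (v r - v s) * s|
          ≤ ∫ s in b..(b + 1), |(v r - v s) * s| :=
            intervalIntegral.abs_integral_le_integral_abs hb1
        _ ≤ ∫ s in b..(b + 1), (C * s + D) := by
            apply intervalIntegral.integral_mono_on hb1
            · apply ContinuousOn.intervalIntegrable
              rw [uIcc_of_le hb1]
              exact (((continuousOn_const.sub hv_cont)).mul continuous_id.continuousOn).abs
            · exact ((continuous_const.mul continuous_id).add continuous_const).intervalIntegrable _ _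
            · intro s hs
              rw [abs_mul, abs_of_nonneg (by linarith [hs.1] : (0:ℝ) ≤ s)]
              exact hK s hs
        _ = C * (b + 1 / 2) + D := by
            have h1 : IntervalIntegrable (fun s : ℝ => C * s) volume b (b + 1) :=
              (continuous_const.mul continuous_id').intervalIntegrable _ _
            rw [intervalIntegral.integral_add h1 intervalIntegrable_const,
              intervalIntegral.integral_const_mul, integral_id,
              intervalIntegral.integral_const, smul_eq_mul]
            ring
    rw [abs_mul, abs_of_pos hWpos] at hmono
    exact hmono
  rcases le_or_gt (1/2 : ℝ) b with hbig | hsmall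
  · -- case b ≥ 1/2
    set K := Real.sqrt (1 / b * I) with hK
    have hK2 : K ^ 2 = 1 / b * I := Real.sq_sqrt (by positivity)
    have hbd : ∀ s ∈ Icc b (b + 1), |v r - v s| ≤ K := by
      intro s hs
      have hs0 : 0 < s := lt_of_lt_of_le hb hs.1
      have h1 : Real.log b ≤ Real.log r := Real.log_le_log hb hr.1
      have h2 : Real.log r ≤ Real.log (b + 1) := Real.log_le_log hr0 hr.2
      have h3 : Real.log b ≤ Real.log s := Real.log_le_log hb hs.1
      have h4 : Real.log s ≤ Real.log (b + 1) := Real.log_le_log hs0 hs.2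
      have h5 : Real.log (b + 1) - Real.log b ≤ 1 / b := by
        have hd := Real.log_le_sub_one_of_pos (show (0:ℝ) < (b + 1) / b by positivity)
        rw [Real.log_div (by linarith) hb.ne'] at hd
        have he : (b + 1) / b - 1 = 1 / b := by field_simp; ring
        linarith
      have hlog : |Real.log r - Real.log s| ≤ 1 / b := by
        rw [abs_le]
        constructor <;> linarith
      have h6 : (v r - v s) ^ 2 ≤ 1 / b * I :=
        le_trans (hP' s hs) (mul_le_mul_of_nonneg_right hlog hI0)
      calc |v r - v s| = Real.sqrt ((v r - v s) ^ 2) := (Real.sqrt_sq_eq_abs _).symm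
        _ ≤ K := Real.sqrt_le_sqrt h6
    have h7 := havg K 0 (fun s hs => by
      rw [add_zero]
      exact mul_le_mul_of_nonneg_right (hbd s hs) (by linarith [hs.1]))
    rw [add_zero] at h7
    have hvr : |v r| ≤ K := le_of_mul_le_mul_right h7 hWpos
    have hv2 : v r ^ 2 ≤ 1 / b * I := by
      calc v r ^ 2 = |v r| ^ 2 := (sq_abs _).symm
        _ ≤ K ^ 2 := pow_le_pow_left₀ (abs_nonneg _) hvr 2
        _ = 1 / b * I := hK2
    have hrp : r ^ (1 - α) ≤ 3 * b := by
      rcases le_total r 1 with h | h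
      · have := Real.rpow_le_one hr0.le h (le_of_lt hβ)
        linarith
      · have h8 : r ^ (1 - α) ≤ r ^ (1:ℝ) :=
          Real.rpow_le_rpow_of_exponent_le h (by linarith)
        rw [Real.rpow_one] at h8
        have : r ≤ b + 1 := hr.2
        linarith
    have h9 : v r ^ 2 * r ^ (1 - α) ≤ (1 / b * I) * (3 * b) := by
      apply mul_le_mul hv2 hrp (Real.rpow_nonneg hr0.le _)
      positivity
    have h10 : (1 / b * I) * (3 * b) = 3 * I := by
      field_simp
    have h11 : (0:ℝ) ≤ 2 / (1 - α) := by positivity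
    nlinarith [hI0]
  · -- case b < 1/2
    have hr32 : r ≤ 3 / 2 := by linarith [hr.2]
    set L : ℝ → ℝ := fun t => Real.log 2 - Real.log t with hLdef
    clear_value L
    have hlog2 : (0:ℝ) ≤ Real.log 2 := Real.log_nonneg one_le_two
    have hlog2' : Real.log 2 ≤ 1 := by
      have := Real.log_le_sub_one_of_pos (show (0:ℝ) < 2 by norm_num)
      linarith
    have hL0 : ∀ t, 0 < t → t ≤ 3 / 2 → 0 ≤ L t := by
      intro t ht0 ht1
      have : Real.log t ≤ Real.log 2 := Real.log_le_log ht0 (by linarith)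
      simp only [hLdef]
      linarith
    have hLr0 : 0 ≤ L r := hL0 r hr0 hr32
    have hsI := Real.sqrt_nonneg I
    have hsLr := Real.sqrt_nonneg (L r)
    have hbd : ∀ s ∈ Icc b (b + 1), |v r - v s| * s ≤
        (Real.sqrt I * Real.sqrt (L r)) * s + 2 * Real.sqrt I := by
      intro s hs
      have hs0 : 0 < s := lt_of_lt_of_le hb hs.1
      have hs32 : s ≤ 3 / 2 := by linarith [hs.2]
      have hLs0 : 0 ≤ L s := hL0 s hs0 hs32
      have hlogr : Real.log r ≤ Real.log 2 := Real.log_le_log hr0 (by linarith)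
      have hlogs : Real.log s ≤ Real.log 2 := Real.log_le_log hs0 (by linarith)
      have hlog : |Real.log r - Real.log s| ≤ L r + L s := by
        rw [abs_le]
        simp only [hLdef]
        constructor <;> linarith
      have h6 : (v r - v s) ^ 2 ≤ (L r + L s) * I :=
        le_trans (hP' s hs) (mul_le_mul_of_nonneg_right hlog hI0)
      have h7 : |v r - v s| ≤ (Real.sqrt (L r) + Real.sqrt (L s)) * Real.sqrt I := by
        calc |v r - v s| = Real.sqrt ((v r - v s) ^ 2) := (Real.sqrt_sq_eq_abs _).symm
          _ ≤ Real.sqrt ((L r + L s) * I) := Real.sqrt_le_sqrt h6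
          _ = Real.sqrt (L r + L s) * Real.sqrt I := Real.sqrt_mul (by linarith) I
          _ ≤ (Real.sqrt (L r) + Real.sqrt (L s)) * Real.sqrt I :=
            mul_le_mul_of_nonneg_right (sqrt_add_le' _ _ hLr0 hLs0) hsI
      have h8 : Real.sqrt (L s) * s ≤ 2 := by
        have h9 : L s ≤ 2 / s := by
          have hd := Real.log_le_sub_one_of_pos (show (0:ℝ) < 2 / s by positivity)
          rw [Real.log_div (by norm_num) hs0.ne'] at hd
          simp only [hLdef]
          have : 0 < 2 / s := by positivity
          linarith
        calc Real.sqrt (L s) * s = Real.sqrt (L s * s ^ 2) := by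
              rw [Real.sqrt_mul hLs0, Real.sqrt_sq hs0.le]
          _ ≤ Real.sqrt 4 := by
              apply Real.sqrt_le_sqrt
              have : L s * s ^ 2 ≤ (2 / s) * s ^ 2 :=
                mul_le_mul_of_nonneg_right h9 (sq_nonneg s)
              have h10 : (2 / s) * s ^ 2 = 2 * s := by field_simp
              rw [h10] at this
              linarith
          _ = 2 := by
              rw [show (4:ℝ) = 2 ^ 2 by norm_num, Real.sqrt_sq (by norm_num)]
      calc |v r - v s| * s ≤ ((Real.sqrt (L r) + Real.sqrt (L s)) * Real.sqrt I) * s :=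
            mul_le_mul_of_nonneg_right h7 hs0.le
        _ = (Real.sqrt I * Real.sqrt (L r)) * s + Real.sqrt I * (Real.sqrt (L s) * s) := by
            ring
        _ ≤ (Real.sqrt I * Real.sqrt (L r)) * s + 2 * Real.sqrt I := by
            have := mul_le_mul_of_nonneg_left h8 hsI
            linarith
    have h11 := havg _ _ hbd
    have hvr : |v r| ≤ Real.sqrt I * Real.sqrt (L r) + 4 * Real.sqrt I := by
      have h12 : |v r| * (b + 1 / 2) ≤
          (Real.sqrt I * Real.sqrt (L r) + 4 * Real.sqrt I) * (b + 1 / 2) := by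
        nlinarith [h11]
      exact le_of_mul_le_mul_right h12 hWpos
    have hv2 : v r ^ 2 ≤ I * (2 * L r + 32) := by
      have hsqI := Real.sq_sqrt hI0
      have hsqL := Real.sq_sqrt hLr0
      calc v r ^ 2 = |v r| ^ 2 := (sq_abs _).symm
        _ ≤ (Real.sqrt I * Real.sqrt (L r) + 4 * Real.sqrt I) ^ 2 :=
            pow_le_pow_left₀ (abs_nonneg _) hvr 2
        _ ≤ I * (2 * L r + 32) := by
            nlinarith [sq_nonneg (Real.sqrt (L r) - 4), mul_nonneg hsI hsLr,
              sq_nonneg (Real.sqrt I * (Real.sqrt (L r) - 4))]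
    have hrp0 : (0:ℝ) ≤ r ^ (1 - α) := Real.rpow_nonneg hr0.le _
    have hrp1 : r ^ (1 - α) ≤ 3 / 2 := by
      rcases le_total r 1 with h | h
      · have := Real.rpow_le_one hr0.le h (le_of_lt hβ)
        linarith
      · have h8 : r ^ (1 - α) ≤ r ^ (1:ℝ) :=
          Real.rpow_le_rpow_of_exponent_le h (by linarith)
        rw [Real.rpow_one] at h8
        linarith
    have hLrp : L r * r ^ (1 - α) ≤ 2 + 1 / (1 - α) := by
      have hpart2 : (- Real.log r) * r ^ (1 - α) ≤ 1 / (1 - α) := by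
        rcases le_total r 1 with h | h
        · have hu0 : 0 < r ^ (1 - α) := Real.rpow_pos_of_pos hr0 _
          have hu1 : r ^ (1 - α) ≤ 1 := Real.rpow_le_one hr0.le h (le_of_lt hβ)
          have hlu : Real.log (r ^ (1 - α)) = (1 - α) * Real.log r :=
            Real.log_rpow hr0 _
          have hiv := Real.log_le_sub_one_of_pos (inv_pos.mpr hu0)
          rw [Real.log_inv, hlu] at hiv
          rw [le_div_iff₀ hβ]
          have hmul := mul_le_mul_of_nonneg_left hiv hu0.le
          have hcancel : r ^ (1 - α) * (r ^ (1 - α))⁻¹ = 1 := mul_inv_cancel₀ hu0.ne'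
          nlinarith [hmul, hcancel, hu1, hu0.le]
        · have h1 : 0 ≤ Real.log r := Real.log_nonneg h
          have : (- Real.log r) * r ^ (1 - α) ≤ 0 :=
            mul_nonpos_of_nonpos_of_nonneg (by linarith) hrp0
          have : (0:ℝ) ≤ 1 / (1 - α) := by positivity
          linarith
      have hpart1 : Real.log 2 * r ^ (1 - α) ≤ 3 / 2 := by
        nlinarith [hrp0, hrp1, hlog2, hlog2']
      have hexp : L r * r ^ (1 - α)
          = Real.log 2 * r ^ (1 - α) + (- Real.log r) * r ^ (1 - α) := by
        simp only [hLdef]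
        ring
      rw [hexp]
      linarith
    have hfin : v r ^ 2 * r ^ (1 - α) ≤ (I * (2 * L r + 32)) * r ^ (1 - α) :=
      mul_le_mul_of_nonneg_right hv2 hrp0
    have hfin2 : (I * (2 * L r + 32)) * r ^ (1 - α)
        = I * (2 * (L r * r ^ (1 - α)) + 32 * r ^ (1 - α)) := by ring
    have hfin3 : 2 * (L r * r ^ (1 - α)) + 32 * r ^ (1 - α)
        ≤ 2 * (2 + 1 / (1 - α)) + 32 * (3 / 2) := by linarith
    have hfin4 : I * (2 * (L r * r ^ (1 - α)) + 32 * r ^ (1 - α))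
        ≤ I * (52 + 2 / (1 - α)) := by
      have hq : 2 * (1 / (1 - α)) = 2 / (1 - α) := by ring
      exact mul_le_mul_of_nonneg_left (by linarith) hI0
    have h11 : (0:ℝ) ≤ 2 / (1 - α) := by positivity
    nlinarith [hI0]
end

section
/- The constant 1/3 in the weighted Poincaré–Sobolev inequality is sharp: for every S < 1/3 there exist b > 0 and an H¹ function v on [b,b+1] with ∫_b^{b+1} v(r)·r dr = 0 such that max_{b ≤ r ≤ b+1} v(r)²·r > S · ∫_b^{b+1} v'(r)² · r dr. -/
open MeasureTheory Set

private lemma poly_integral (b x c₃ c₂ c₁ c₀ : ℝ) :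
    (∫ t in b..x, c₃ * t ^ 3 + c₂ * t ^ 2 + c₁ * t + c₀)
      = (c₃ * x ^ 4 / 4 + c₂ * x ^ 3 / 3 + c₁ * x ^ 2 / 2 + c₀ * x)
        - (c₃ * b ^ 4 / 4 + c₂ * b ^ 3 / 3 + c₁ * b ^ 2 / 2 + c₀ * b) := by
  have h : ∀ t ∈ Set.uIcc b x,
      HasDerivAt (fun t : ℝ => c₃ * t ^ 4 / 4 + c₂ * t ^ 3 / 3 + c₁ * t ^ 2 / 2 + c₀ * t)
        (c₃ * t ^ 3 + c₂ * t ^ 2 + c₁ * t + c₀) t := by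
    intro t _
    have h' : HasDerivAt (fun t : ℝ => c₃ * t ^ 4 / 4 + c₂ * t ^ 3 / 3 + c₁ * t ^ 2 / 2 + c₀ * t)
        (c₃ * (4 * t ^ 3) / 4 + c₂ * (3 * t ^ 2) / 3 + c₁ * (2 * t ^ 1) / 2 + c₀ * 1) t := by
      apply HasDerivAt.add
      apply HasDerivAt.add
      apply HasDerivAt.add
      · exact ((hasDerivAt_pow 4 t).const_mul c₃).div_const 4
      · exact ((hasDerivAt_pow 3 t).const_mul c₂).div_const 3
      · exact ((hasDerivAt_pow 2 t).const_mul c₁).div_const 2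
      · simpa using (hasDerivAt_id t).const_mul c₀
    convert h' using 1
    ring
  have hint : IntervalIntegrable (fun t : ℝ => c₃ * t ^ 3 + c₂ * t ^ 2 + c₁ * t + c₀)
      MeasureTheory.volume b x :=
    Continuous.intervalIntegrable (by continuity) b x
  rw [intervalIntegral.integral_eq_sub_of_hasDerivAt h hint]

set_option maxHeartbeats 1600000 in
/-- Sharpness of the constant `1/3` in the Poincaré–Sobolev inequality: for every
`S < 1/3` there exist `b > 0` and an `H¹` function `v` on `[b, b+1]` (with derivative
`g`) of mean zero with respect to `r dr` such that
`max_{b ≤ r ≤ b+1} v(r)² r > S ∫_b^{b+1} v'(r)² r dr`. -/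
theorem poincare_sobolev_constant_sharp (S : ℝ) (hS : S < 1 / 3) :
    ∃ b : ℝ, 0 < b ∧ ∃ v g : ℝ → ℝ,
      ContinuousOn v (Set.Icc b (b + 1)) ∧
      MeasureTheory.IntegrableOn (fun t => g t ^ 2) (Set.Ioo b (b + 1)) ∧
      (∀ x ∈ Set.Icc b (b + 1), v x = v b + ∫ t in b..x, g t) ∧
      (∫ r in b..(b + 1), v r * r) = 0 ∧
      ∃ r ∈ Set.Icc b (b + 1),
        v r ^ 2 * r > S * ∫ r in b..(b + 1), (g r) ^ 2 * r := by
  set e : ℝ := 1 / 3 - S with he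
  have he0 : 0 < e := by simp only [he]; linarith
  set b : ℝ := max 1 (1 / e) with hbdef
  have hb1 : (1 : ℝ) ≤ b := le_max_left _ _
  have hb0 : (0 : ℝ) < b := lt_of_lt_of_le one_pos hb1
  have hbe : 1 ≤ e * b := by
    have h' : 1 / e ≤ b := le_max_right _ _
    calc (1 : ℝ) = e * (1 / e) := by field_simp
    _ ≤ e * b := by nlinarith
  have hb2 : (0 : ℝ) < b + 1 / 2 := by linarith
  set C : ℝ := -(b / 6 + 1 / 8) / (b + 1 / 2) with hC
  have hCeq : C * (b + 1 / 2) = -(b / 6 + 1 / 8) := by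
    rw [hC]; field_simp
  clear_value e b C
  refine ⟨b, hb0, fun r => (r - b) ^ 2 / 2 + C, fun r => r - b, ?_, ?_, ?_, ?_, ?_⟩
  · apply Continuous.continuousOn; continuity
  · exact ((Continuous.integrableOn_Icc (by continuity)).mono_set Set.Ioo_subset_Icc_self)
  · intro x _
    have h1 : (∫ t in b..x, t - b)
        = (∫ t in b..x, 0 * t ^ 3 + 0 * t ^ 2 + 1 * t + (-b)) := by
      apply intervalIntegral.integral_congr
      intro t _; ring
    rw [h1, poly_integral]; ring
  · have h1 : (∫ r in b..(b + 1), ((r - b) ^ 2 / 2 + C) * r)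
        = (∫ r in b..(b + 1), (1/2 : ℝ) * r ^ 3 + (-b) * r ^ 2 + (b^2/2 + C) * r + 0) := by
      apply intervalIntegral.integral_congr
      intro t _; ring
    rw [h1, poly_integral]
    linear_combination hCeq
  · refine ⟨b + 1, by constructor <;> [linarith; linarith], ?_⟩
    have h1 : (∫ r in b..(b + 1), (r - b) ^ 2 * r)
        = (∫ r in b..(b + 1), (1 : ℝ) * r ^ 3 + (-2*b) * r ^ 2 + (b^2) * r + 0) := by
      apply intervalIntegral.integral_congr
      intro t _; ring
    rw [h1, poly_integral]
    have h2 : ((1:ℝ) * (b+1) ^ 4 / 4 + (-2*b) * (b+1) ^ 3 / 3 + b^2 * (b+1) ^ 2 / 2 + 0 * (b+1))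
        - ((1:ℝ) * b ^ 4 / 4 + (-2*b) * b ^ 3 / 3 + b^2 * b ^ 2 / 2 + 0 * b) = b / 3 + 1 / 4 := by
      ring
    rw [h2]
    have hS' : S = 1 / 3 - e := by rw [he]; ring
    have hD : (1/2 + C) * (b + 1/2) = b/3 + 1/8 := by linear_combination hCeq
    have f1 : 1 * (b * b) ≤ e * b * (b * b) :=
      mul_le_mul_of_nonneg_right hbe (mul_self_nonneg b)
    have f2 : 1 * b ≤ b * b := mul_le_mul_of_nonneg_right hb1 hb0.le
    have f3 : 0 ≤ e * (b * b) := mul_nonneg he0.le (mul_self_nonneg b)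
    have f4 : 0 ≤ e * b := mul_nonneg he0.le hb0.le
    have hP : e * (b^3/3 + 7*b^2/12 + b/3 + 1/16) - 7*b/576 - 1/192 > 0 := by
      nlinarith [f1, f2, f3, f4, he0.le, hb1]
    have hA : (1/2 + C)^2 * (b+1) * (b+1/2)^2 = (b/3+1/8)^2 * (b+1) := by
      linear_combination ((1/2 + C)*(b+1/2) + (b/3+1/8)) * (b+1) * hD
    have hgt : (b/3+1/8)^2*(b+1) > (1/3-e)*(b/3+1/4)*(b+1/2)^2 := by nlinarith [hP]
    have h4 : (0:ℝ) < (b+1/2)^2 := pow_pos hb2 2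
    have final : (1/2 + C)^2 * (b+1) > (1/3 - e) * (b/3 + 1/4) := by
      by_contra hcon
      push_neg at hcon
      have h5 := mul_le_mul_of_nonneg_right hcon (le_of_lt h4)
      rw [hA] at h5
      linarith [hgt, h5]
    have hrw : ((b + 1 - b)^2/2 + C) = 1/2 + C := by ring_nf
    show ((b + 1 - b) ^ 2 / 2 + C) ^ 2 * (b + 1) > S * (b / 3 + 1 / 4)
    rw [hrw, hS']
    exact final
end

section
/- Let s > t > 0 be real numbers and let λ ∈ ℝ. Then ∫_0^∞ μ^{s−t−1} · ( max(−(λ+μ), 0) )^t dμ = ( Γ(s−t)·Γ(t+1)/Γ(s+1) ) · ( max(−λ, 0) )^s, where Γ denotes Euler's Gamma function. -/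
open MeasureTheory Set Real

lemma aizenman_lieb_scaled_beta {s t a : ℝ} (ht : 0 < t) (hts : t < s) (ha : 0 < a) :
    ∫ x in (0:ℝ)..a, x ^ (s - t - 1) * (a - x) ^ t
      = (Real.Gamma (s - t) * Real.Gamma (t + 1) / Real.Gamma (s + 1)) * a ^ s := by
  have hst : (0:ℝ) < s - t := by linarith
  have hG : Real.Gamma (s + 1) ≠ 0 := (Real.Gamma_pos_of_pos (by linarith)).ne'
  apply Complex.ofReal_injective
  have key : (↑(∫ x in (0:ℝ)..a, x ^ (s - t - 1) * (a - x) ^ t) : ℂ)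
      = ∫ x in (0:ℝ)..a, (x : ℂ) ^ (((s - t : ℝ) : ℂ) - 1) * ((a : ℂ) - x) ^ (((t + 1 : ℝ) : ℂ) - 1) := by
    rw [← intervalIntegral.integral_ofReal]
    refine intervalIntegral.integral_congr fun x hx => ?_
    rw [uIcc_of_le ha.le] at hx
    rw [Complex.ofReal_mul, Complex.ofReal_cpow hx.1,
      Complex.ofReal_cpow (by linarith [hx.2] : (0:ℝ) ≤ a - x)]
    push_cast
    ring_nf
  rw [key, Complex.betaIntegral_scaled ((s - t : ℝ) : ℂ) ((t + 1 : ℝ) : ℂ) ha]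
  have hbeta : Complex.betaIntegral ((s - t : ℝ) : ℂ) ((t + 1 : ℝ) : ℂ)
      = ↑(Real.Gamma (s - t) * Real.Gamma (t + 1) / Real.Gamma (s + 1)) := by
    have h := Complex.Gamma_mul_Gamma_eq_betaIntegral
      (s := ((s - t : ℝ) : ℂ)) (t := ((t + 1 : ℝ) : ℂ))
      (by simpa using hst) (by simpa using (by linarith : (0:ℝ) < t + 1))
    have hsum : ((s - t : ℝ) : ℂ) + ((t + 1 : ℝ) : ℂ) = ((s + 1 : ℝ) : ℂ) := by
      push_cast; ring
    rw [hsum, Complex.Gamma_ofReal, Complex.Gamma_ofReal, Complex.Gamma_ofReal] at h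
    have hGc : ((Real.Gamma (s + 1) : ℂ)) ≠ 0 := by exact_mod_cast hG
    rw [Complex.ofReal_div, Complex.ofReal_mul, eq_div_iff hGc, mul_comm]
    exact h.symm
  rw [hbeta]
  have hexp : ((s - t : ℝ) : ℂ) + ((t + 1 : ℝ) : ℂ) - 1 = ((s : ℝ) : ℂ) := by
    push_cast; ring
  rw [hexp, ← Complex.ofReal_cpow ha.le]
  push_cast
  ring

/-- The Aizenman–Lieb identity: for real `s > t > 0` and `λ ∈ ℝ`,
`∫_0^∞ μ^(s−t−1) ((λ+μ)_-)^t dμ = (Γ(s−t)Γ(t+1)/Γ(s+1)) (λ_-)^s`,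
where `y_- = max(−y, 0)`. -/
theorem aizenman_lieb_identity (s t : ℝ) (ht : 0 < t) (hts : t < s) (lam : ℝ) :
    ∫ μ in Set.Ioi (0 : ℝ), μ ^ (s - t - 1) * (max (-(lam + μ)) 0) ^ t
      = (Real.Gamma (s - t) * Real.Gamma (t + 1) / Real.Gamma (s + 1))
          * (max (-lam) 0) ^ s := by
  set g : ℝ → ℝ := fun μ => μ ^ (s - t - 1) * (max (-(lam + μ)) 0) ^ t with hg
  rcases le_or_gt 0 lam with hlam | hlam
  · -- λ ≥ 0: both sides vanish
    have h1 : ∀ μ ∈ Set.Ioi (0:ℝ), g μ = 0 := by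
      intro μ hμ
      have h0 : max (-(lam + μ)) 0 = 0 := max_eq_right (by simp only [neg_nonpos]; linarith [mem_Ioi.mp hμ])
      show μ ^ (s - t - 1) * (max (-(lam + μ)) 0) ^ t = 0
      rw [h0, Real.zero_rpow ht.ne', mul_zero]
    rw [setIntegral_congr_fun measurableSet_Ioi h1]
    have : max (-lam) 0 = 0 := max_eq_right (by linarith)
    simp [this, Real.zero_rpow (by linarith : s ≠ 0)]
  · -- λ < 0
    set a : ℝ := -lam with haa
    have ha : 0 < a := by simp [haa]; linarith
    set f : ℝ → ℝ := fun μ => μ ^ (s - t - 1) * (a - μ) ^ t with hf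
    have hEq1 : Set.EqOn g f (Set.Ioc 0 a) := by
      intro μ hμ
      have h0 : max (-(lam + μ)) 0 = a - μ := by
        rw [max_eq_left (by linarith [hμ.2, haa.le, haa.ge] : (0:ℝ) ≤ -(lam + μ))]
        rw [haa]; ring
      show μ ^ (s - t - 1) * (max (-(lam + μ)) 0) ^ t = μ ^ (s - t - 1) * (a - μ) ^ t
      rw [h0]
    have hEq2 : Set.EqOn g (fun _ => (0:ℝ)) (Set.Ioi a) := by
      intro μ hμ
      have hμ' : a < μ := mem_Ioi.mp hμ
      have h0 : max (-(lam + μ)) 0 = 0 := max_eq_right (by linarith [haa.le, haa.ge])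
      show μ ^ (s - t - 1) * (max (-(lam + μ)) 0) ^ t = 0
      rw [h0, Real.zero_rpow ht.ne', mul_zero]
    have hint_f : IntegrableOn f (Set.Ioc 0 a) := by
      have h1 : IntegrableOn (fun μ : ℝ => μ ^ (s - t - 1)) (Set.Ioc 0 a) := by
        have := intervalIntegral.intervalIntegrable_rpow' (a := 0) (b := a) (r := s - t - 1) (by linarith)
        rw [intervalIntegrable_iff, uIoc_of_le ha.le] at this
        exact this
      have h2 : Integrable (fun μ : ℝ => (a - μ) ^ t * μ ^ (s - t - 1))
          (volume.restrict (Set.Ioc 0 a)) := by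
        refine Integrable.bdd_mul (c := a ^ t) h1 ?_ ?_
        · exact ((continuous_const.sub continuous_id).rpow_const
            (fun x => Or.inr ht.le)).aestronglyMeasurable
        · filter_upwards [ae_restrict_mem measurableSet_Ioc] with x hx
          rw [Real.norm_of_nonneg (Real.rpow_nonneg (by linarith [hx.2]) t)]
          exact Real.rpow_le_rpow (by linarith [hx.2]) (by linarith [hx.1]) ht.le
      exact h2.congr (Filter.Eventually.of_forall fun x => mul_comm _ _)
    have hint_g1 : IntegrableOn g (Set.Ioc 0 a) :=
      hint_f.congr_fun hEq1.symm measurableSet_Ioc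
    have hint_g2 : IntegrableOn g (Set.Ioi a) :=
      (integrableOn_zero).congr_fun hEq2.symm measurableSet_Ioi
    have hsplit : Set.Ioi (0:ℝ) = Set.Ioc 0 a ∪ Set.Ioi a := (Set.Ioc_union_Ioi_eq_Ioi ha.le).symm
    rw [hsplit, setIntegral_union (Set.Ioc_disjoint_Ioi le_rfl) measurableSet_Ioi hint_g1 hint_g2]
    rw [setIntegral_congr_fun measurableSet_Ioi hEq2, setIntegral_congr_fun measurableSet_Ioc hEq1]
    simp only [integral_zero, add_zero]
    rw [← intervalIntegral.integral_of_le ha.le]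
    rw [aizenman_lieb_scaled_beta ht hts ha]
    have : max (-lam) 0 = a := max_eq_left (by linarith)
    rw [this]
end

section
/- Let 0 ≤ α < 1, b > 0, and let S > 0 be a constant such that every H¹ function v on [b,b+1] with ∫_b^{b+1} v(r)·r dr = 0 satisfies max_{b ≤ r ≤ b+1} v(r)²·r^{1−α} ≤ S·∫_b^{b+1} v'(r)²·r dr. Let V be a nonnegative integrable function on (b,b+1) with ∫_b^{b+1} V(r)·r^α dr ≤ 1/S. Then for every continuously differentiable function u : [b,b+1] → ℝ satisfying ∫_b^{b+1} u(r)·√r dr = 0, one has ∫_b^{b+1} V(r)·u(r)² dr ≤ ∫_b^{b+1} ( (d/dr)( u(r)·r^{−1/2} ) )² · r dr. -/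
open MeasureTheory Set

/-- If `0 ≤ α < 1`, `b > 0`, and `S > 0` is a constant for which the weighted
Poincaré–Sobolev inequality holds on `[b, b+1]`, and `V ≥ 0` is integrable on `(b, b+1)`
with `∫_b^{b+1} V(r) r^α dr ≤ 1/S`, then the form `h_b[u] − ∫ V|u|²` is nonnegative on
the subspace of `C¹` functions orthogonal to `√r` in `L²(b, b+1)`. -/
theorem form_nonneg_orthogonal_sqrt_weighted (α : ℝ) (hα0 : 0 ≤ α) (hα1 : α < 1)
    (b : ℝ) (hb : 0 < b) (S : ℝ) (hSpos : 0 < S)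
    (hS : ∀ v g : ℝ → ℝ, ContinuousOn v (Set.Icc b (b + 1)) →
      MeasureTheory.IntegrableOn (fun t => g t ^ 2) (Set.Ioo b (b + 1)) →
      (∀ x ∈ Set.Icc b (b + 1), v x = v b + ∫ t in b..x, g t) →
      (∫ r in b..(b + 1), v r * r) = 0 →
      ∀ r ∈ Set.Icc b (b + 1),
        v r ^ 2 * r ^ (1 - α) ≤ S * ∫ r in b..(b + 1), (g r) ^ 2 * r)
    (V : ℝ → ℝ) (hV : ∀ r ∈ Set.Ioo b (b + 1), 0 ≤ V r)
    (hVint : MeasureTheory.IntegrableOn V (Set.Ioo b (b + 1)))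
    (hVsmall : (∫ r in b..(b + 1), V r * r ^ α) ≤ 1 / S)
    (u : ℝ → ℝ) (hu : ContDiffOn ℝ 1 u (Set.Icc b (b + 1)))
    (hmean : (∫ r in b..(b + 1), u r * Real.sqrt r) = 0) :
    ∫ r in b..(b + 1), V r * u r ^ 2
      ≤ ∫ r in b..(b + 1),
          (derivWithin (fun s : ℝ => u s * s ^ (-(1 / 2) : ℝ)) (Set.Icc b (b + 1)) r) ^ 2
            * r := by
  have hble : b ≤ b + 1 := by linarith
  have hblt : b < b + 1 := by linarith
  have hpos : ∀ r ∈ Set.Icc b (b + 1), 0 < r := fun r hr => lt_of_lt_of_le hb hr.1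
  set f : ℝ → ℝ := fun s => u s * s ^ (-(1 / 2) : ℝ) with hf
  set g : ℝ → ℝ := derivWithin f (Set.Icc b (b + 1)) with hg
  -- f is C¹ on the interval
  have hfC1 : ContDiffOn ℝ 1 f (Set.Icc b (b + 1)) := by
    apply hu.mul
    intro x hx
    exact (Real.contDiffAt_rpow_const_of_ne (ne_of_gt (hpos x hx))).contDiffWithinAt
  have hUD : UniqueDiffOn ℝ (Set.Icc b (b + 1)) := uniqueDiffOn_Icc hblt
  have hgcont : ContinuousOn g (Set.Icc b (b + 1)) :=
    hfC1.continuousOn_derivWithin hUD le_rfl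
  have hfcont : ContinuousOn f (Set.Icc b (b + 1)) := hfC1.continuousOn
  -- FTC
  have hFTC : ∀ x ∈ Set.Icc b (b + 1), f x = f b + ∫ t in b..x, g t := by
    intro x hx
    have h1 : ∫ t in b..x, g t = f x - f b := by
      apply intervalIntegral.integral_eq_sub_of_hasDeriv_right_of_le hx.1
      · exact hfcont.mono (Set.Icc_subset_Icc le_rfl hx.2)
      · intro t ht
        have htI : t ∈ Set.Ioo b (b + 1) := ⟨ht.1, lt_of_lt_of_le ht.2 hx.2⟩
        have hmem : Set.Icc b (b + 1) ∈ nhds t := Icc_mem_nhds htI.1 htI.2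
        have hd : DifferentiableWithinAt ℝ f (Set.Icc b (b + 1)) t :=
          (hfC1.differentiableOn one_ne_zero) t ⟨le_of_lt htI.1, le_of_lt htI.2⟩
        exact ((hd.hasDerivWithinAt.hasDerivAt hmem).hasDerivWithinAt)
      · exact (hgcont.mono (Set.Icc_subset_Icc le_rfl hx.2)).intervalIntegrable_of_Icc hx.1
    linarith [h1]
  -- integrability of g²
  have hIg2 : MeasureTheory.IntegrableOn (fun t => g t ^ 2) (Set.Ioo b (b + 1)) :=
    ((hgcont.pow 2).integrableOn_Icc).mono_set Set.Ioo_subset_Icc_self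
  -- orthogonality in the form needed
  have hmean' : (∫ r in b..(b + 1), f r * r) = 0 := by
    rw [← hmean]
    apply intervalIntegral.integral_congr
    intro r hr
    rw [Set.uIcc_of_le hble] at hr
    have hr0 : (0 : ℝ) < r := hpos r hr
    have : r ^ (-(1 / 2) : ℝ) * r = Real.sqrt r := by
      rw [Real.sqrt_eq_rpow]
      nth_rewrite 2 [← Real.rpow_one r]
      rw [← Real.rpow_add hr0]
      norm_num
    simp only [hf]
    rw [mul_assoc, this]
  set I : ℝ := ∫ r in b..(b + 1), g r ^ 2 * r with hI
  have hInonneg : 0 ≤ I := by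
    apply intervalIntegral.integral_nonneg hble
    intro t ht
    exact mul_nonneg (sq_nonneg _) (le_of_lt (hpos t ht))
  have hbound := hS f g hfcont hIg2 hFTC hmean'
  -- u r = f r * r^(1/2)
  have hufr : ∀ r ∈ Set.Icc b (b + 1), u r ^ 2 = f r ^ 2 * r := by
    intro r hr
    have hr0 : (0 : ℝ) < r := hpos r hr
    simp only [hf]
    rw [mul_pow, ← Real.rpow_natCast (r ^ (-(1 / 2) : ℝ)) 2, ← Real.rpow_mul (le_of_lt hr0)]
    norm_num
    rw [Real.rpow_neg_one]
    field_simp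
  -- bound on u² on the interval: to get integrability
  obtain ⟨C, hC⟩ := (isCompact_Icc (a := b) (b := b + 1)).exists_bound_of_continuousOn
    ((hu.continuousOn.mul hu.continuousOn))
  have hu2meas : AEStronglyMeasurable (fun r => u r ^ 2) (volume.restrict (Set.Ioo b (b + 1))) := by
    have : ContinuousOn (fun r => u r ^ 2) (Set.Ioo b (b + 1)) :=
      ((hu.continuousOn.mono Set.Ioo_subset_Icc_self).pow 2)
    exact this.aestronglyMeasurable measurableSet_Ioo
  have hrαmeas : AEStronglyMeasurable (fun r : ℝ => r ^ α) (volume.restrict (Set.Ioo b (b + 1))) :=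
    (Real.continuous_rpow_const hα0).aestronglyMeasurable.restrict
  -- integrability of V * u²
  have hVu2 : MeasureTheory.IntegrableOn (fun r => V r * u r ^ 2) (Set.Ioo b (b + 1)) := by
    apply MeasureTheory.Integrable.mono' (hVint.norm.const_mul C)
    · exact hVint.aestronglyMeasurable.mul hu2meas
    · filter_upwards [MeasureTheory.ae_restrict_mem measurableSet_Ioo] with r hr
      have h1 : ‖u r * u r‖ ≤ C := hC r (Set.Ioo_subset_Icc_self hr)
      have h2 : u r ^ 2 ≤ C := by
        rw [sq]
        calc u r * u r ≤ ‖u r * u r‖ := by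
              rw [Real.norm_eq_abs]; exact le_abs_self _
          _ ≤ C := h1
      have hC0 : 0 ≤ C := le_trans (sq_nonneg (u r)) h2
      rw [norm_mul, Real.norm_eq_abs (u r ^ 2), abs_of_nonneg (sq_nonneg _)]
      calc ‖V r‖ * u r ^ 2 ≤ ‖V r‖ * C := by
            exact mul_le_mul_of_nonneg_left h2 (norm_nonneg _)
        _ = C * ‖V r‖ := mul_comm _ _
  -- integrability of V * r^α
  have hVrα : MeasureTheory.IntegrableOn (fun r => V r * r ^ α) (Set.Ioo b (b + 1)) := by
    apply MeasureTheory.Integrable.mono' (hVint.norm.const_mul ((b + 1) ^ α))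
    · exact hVint.aestronglyMeasurable.mul hrαmeas
    · filter_upwards [MeasureTheory.ae_restrict_mem measurableSet_Ioo] with r hr
      have hr0 : (0 : ℝ) < r := hpos r (Set.Ioo_subset_Icc_self hr)
      have h2 : r ^ α ≤ (b + 1) ^ α :=
        Real.rpow_le_rpow (le_of_lt hr0) (le_of_lt hr.2) hα0
      rw [norm_mul, Real.norm_eq_abs (r ^ α), abs_of_nonneg (Real.rpow_nonneg (le_of_lt hr0) α)]
      calc ‖V r‖ * r ^ α ≤ ‖V r‖ * (b + 1) ^ α := by
            exact mul_le_mul_of_nonneg_left h2 (norm_nonneg _)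
        _ = (b + 1) ^ α * ‖V r‖ := mul_comm _ _
  -- pointwise bound
  have hpt : ∀ r ∈ Set.Ioo b (b + 1), V r * u r ^ 2 ≤ V r * r ^ α * (S * I) := by
    intro r hr
    have hrIcc : r ∈ Set.Icc b (b + 1) := Set.Ioo_subset_Icc_self hr
    have hr0 : (0 : ℝ) < r := hpos r hrIcc
    have hrsplit : r ^ α * r ^ (1 - α) = r := by
      rw [← Real.rpow_add hr0]; norm_num
    have h1 : V r * u r ^ 2 = V r * r ^ α * (f r ^ 2 * r ^ (1 - α)) := by
      have hring : V r * (f r ^ 2 * (r ^ α * r ^ (1 - α)))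
          = V r * r ^ α * (f r ^ 2 * r ^ (1 - α)) := by ring
      rw [hufr r hrIcc, ← hring, hrsplit]
    rw [h1]
    apply mul_le_mul_of_nonneg_left (hbound r hrIcc)
    exact mul_nonneg (hV r hr) (Real.rpow_nonneg (le_of_lt hr0) α)
  -- put everything together
  have hLHS : (∫ r in b..(b + 1), V r * u r ^ 2)
      = ∫ r in Set.Ioo b (b + 1), V r * u r ^ 2 := by
    rw [intervalIntegral.integral_of_le hble, MeasureTheory.integral_Ioc_eq_integral_Ioo]
  have hVα : (∫ r in b..(b + 1), V r * r ^ α)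
      = ∫ r in Set.Ioo b (b + 1), V r * r ^ α := by
    rw [intervalIntegral.integral_of_le hble, MeasureTheory.integral_Ioc_eq_integral_Ioo]
  have step1 : (∫ r in Set.Ioo b (b + 1), V r * u r ^ 2)
      ≤ ∫ r in Set.Ioo b (b + 1), V r * r ^ α * (S * I) :=
    MeasureTheory.setIntegral_mono_on hVu2 (hVrα.mul_const (S * I)) measurableSet_Ioo hpt
  have step2 : (∫ r in Set.Ioo b (b + 1), V r * r ^ α * (S * I)) ≤ I := by
    rw [MeasureTheory.integral_mul_const]
    have h1 : (∫ r in Set.Ioo b (b + 1), V r * r ^ α) ≤ 1 / S := by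
      rw [← hVα]; exact hVsmall
    calc (∫ r in Set.Ioo b (b + 1), V r * r ^ α) * (S * I)
        ≤ (1 / S) * (S * I) :=
          mul_le_mul_of_nonneg_right h1 (mul_nonneg (le_of_lt hSpos) hInonneg)
      _ = I := by field_simp
  calc (∫ r in b..(b + 1), V r * u r ^ 2)
      = ∫ r in Set.Ioo b (b + 1), V r * u r ^ 2 := hLHS
    _ ≤ ∫ r in Set.Ioo b (b + 1), V r * r ^ α * (S * I) := step1
    _ ≤ I := step2
end
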